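/- arXiv:1510.01068 — 7 statements merged into one kernel-verified Lean document; each statement's English description precedes it below -/
import Mathlib

section
/- If ω ∈ Ω_K is periodic with period p (i.e., ω_{n+p} = ω_n for all n), then for every m ∈ Z the p-tuple (ω̃_m mod p, ω̃_{m+1} mod p, …, ω̃_{m+p−1} mod p) is a permutation of {0, 1, …, p−1}. -/
/-- If `ω ∈ Ω_K` is periodic with period `p`, then for every `m` the `p`-tuple
`(ω̃_m mod p, …, ω̃_{m+p-1} mod p)` is a permutation of `{0,…,p-1}`. -/
theorem periodic_gives_permutation (K : ℕ) (hK : 1 ≤ K) (ω : ℤ → ℤ)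
    (hω : ∀ n, ω n ∈ Finset.Icc (0 : ℤ) (K : ℤ))
    (hbij : Function.Bijective (fun n => n + ω n))
    (p : ℕ) (hp : 0 < p) (hper : ∀ n, ω (n + p) = ω n) (m : ℤ) :
    Function.Bijective
      (fun i : Fin p => ((ω (m + (i : ℕ)) + (m + (i : ℕ)) : ℤ) : ZMod p)) := by
  haveI : NeZero p := ⟨hp.ne'⟩
  have hper' : Function.Periodic ω (p : ℤ) := hper
  rw [Fintype.bijective_iff_injective_and_card]
  refine ⟨?_, by simp⟩
  intro i j h
  simp only at h
  set a : ℤ := m + (i : ℕ) with ha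
  set b : ℤ := m + (j : ℕ) with hb
  have hmod : ω a + a ≡ ω b + b [ZMOD (p : ℤ)] :=
    (ZMod.intCast_eq_intCast_iff _ _ _).mp h
  have hd : (p : ℤ) ∣ (ω b + b) - (ω a + a) := hmod.dvd
  obtain ⟨k, hk⟩ := hd
  have hωk : ω (a + (p : ℤ) * k) = ω a := by
    have := (hper'.int_mul k) a
    simpa [mul_comm] using this
  have heq : (fun n => n + ω n) b = (fun n => n + ω n) (a + (p : ℤ) * k) := by
    simp only [hωk]
    linarith
  have hba : b = a + (p : ℤ) * k := hbij.injective heq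
  have : ((j : ℕ) : ℤ) - ((i : ℕ) : ℤ) = (p : ℤ) * k := by
    rw [ha, hb] at hba; linarith
  have hdvd : (p : ℤ) ∣ ((j : ℕ) : ℤ) - ((i : ℕ) : ℤ) := ⟨k, this⟩
  have hi := i.isLt
  have hj := j.isLt
  have hz : ((j : ℕ) : ℤ) - ((i : ℕ) : ℤ) = 0 := by
    refine Int.eq_zero_of_abs_lt_dvd hdvd ?_
    rw [abs_sub_lt_iff]
    constructor <;> omega
  have : (i : ℕ) = (j : ℕ) := by omega
  exact Fin.ext this
end

section
/- The function a : Ω_K → {0,…,K} defined by a(ω) = |{k ∈ {1,…,K} : ω_{−k} − k ≥ 0}| is shift-invariant: a(σω) = a(ω) for every ω ∈ Ω_K, where (σω)_n = ω_{n+1}. -/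
/-- The set `Ω_K`. -/
def OmegaK (K : ℕ) : Set (ℤ → ℤ) :=
  {ω | (∀ n, ω n ∈ Finset.Icc (0 : ℤ) (K : ℤ)) ∧ Function.Bijective (fun n => n + ω n)}

/-- `a(ω) = |{k = 1,…,K : ω_{-k} ≥ k}|`. -/
noncomputable def aOm (K : ℕ) (ω : ℤ → ℤ) : ℕ :=
  ((Finset.Icc (1 : ℤ) (K : ℤ)).filter (fun k => k ≤ ω (-k))).card

/-- `a` is shift-invariant on `Ω_K`. -/
theorem aOm_shift_invariant (K : ℕ) (hK : 1 ≤ K) (ω : ℤ → ℤ) (hω : ω ∈ OmegaK K) :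
    aOm K (fun n => ω (n + 1)) = aOm K ω := by
  obtain ⟨hrange, hinj, hsurj⟩ := hω
  obtain ⟨n, hn⟩ := hsurj 0
  simp only at hn
  have hw0 : ∀ m, 0 ≤ ω m ∧ ω m ≤ (K : ℤ) := by
    intro m
    have := hrange m
    rw [Finset.mem_Icc] at this
    exact this
  set A := (Finset.Icc (0:ℤ) (K:ℤ)).filter (fun j => 0 ≤ -j + ω (-j)) with hA
  set B := (Finset.Icc (0:ℤ) (K:ℤ)).filter (fun j => 1 ≤ -j + ω (-j)) with hB
  have hKpos : (1:ℤ) ≤ (K:ℤ) := by exact_mod_cast hK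
  have hj0mem : -n ∈ Finset.Icc (0:ℤ) (K:ℤ) := by
    have h1 := (hw0 n).1
    have h2 := (hw0 n).2
    rw [Finset.mem_Icc]
    constructor <;> omega
  -- A = insert (-n) B
  have hABj : A = insert (-n) B := by
    ext j
    simp only [hA, hB, Finset.mem_insert, Finset.mem_filter]
    constructor
    · rintro ⟨hjm, hj⟩
      rcases lt_or_ge (-j + ω (-j)) 1 with h | h
      · left
        have heq : (-j) + ω (-j) = n + ω n := by omega
        have := hinj heq
        omega
      · right; exact ⟨hjm, h⟩
    · rintro (rfl | ⟨hjm, hj⟩)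
      · refine ⟨hj0mem, ?_⟩
        simp only [neg_neg]
        omega
      · exact ⟨hjm, by omega⟩
  have hnB : -n ∉ B := by
    simp only [hB, Finset.mem_filter, neg_neg, not_and]
    intro _
    omega
  have hcardAB : A.card = B.card + 1 := by
    rw [hABj, Finset.card_insert_of_notMem hnB]
  -- A.card = aOm K ω + 1
  have hIcc : Finset.Icc (0:ℤ) (K:ℤ) = insert 0 (Finset.Icc (1:ℤ) (K:ℤ)) := by
    ext j
    simp only [Finset.mem_insert, Finset.mem_Icc]
    omega
  have hAcard : A.card = aOm K ω + 1 := by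
    rw [hA, hIcc, Finset.filter_insert]
    have h0 : (0:ℤ) ≤ -0 + ω (-0) := by
      have := (hw0 0).1
      simp only [neg_zero]
      omega
    rw [if_pos h0]
    have h0n : (0:ℤ) ∉ (Finset.Icc (1:ℤ) (K:ℤ)).filter (fun j => 0 ≤ -j + ω (-j)) := by
      simp [Finset.mem_Icc]
    rw [Finset.card_insert_of_notMem h0n, aOm]
    congr 1
    apply congrArg Finset.card
    apply Finset.filter_congr
    intro k hk
    omega
  -- B.card = aOm K (shift ω)
  have hBcard : B.card = aOm K (fun m => ω (m + 1)) := by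
    rw [aOm]
    symm
    apply Finset.card_bij (fun k _ => k - 1)
    · intro k hk
      simp only [Finset.mem_filter, Finset.mem_Icc] at hk
      simp only [hB, Finset.mem_filter, Finset.mem_Icc]
      have : -(k-1) = -k + 1 := by ring
      rw [this]
      refine ⟨⟨by omega, by omega⟩, ?_⟩
      have := hk.2
      omega
    · intro a ha b hb hab
      omega
    · intro j hj
      simp only [hB, Finset.mem_filter, Finset.mem_Icc] at hj
      have hjK : j ≠ (K:ℤ) := by
        intro h
        have := (hw0 (-(K:ℤ))).2
        rw [h] at hj
        omega
      refine ⟨j + 1, ?_, by ring⟩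
      simp only [Finset.mem_filter, Finset.mem_Icc]
      have : -(j+1) + 1 = -j := by ring
      rw [this]
      refine ⟨⟨by omega, by omega⟩, by omega⟩
  omega
end

section
/- For every ω ∈ Ω_{K,l}, lim_{N→∞} (1/N) Σ_{n=0}^{N−1} ω_n = l; moreover |Σ_{n=m}^{m+N−1} ω_n − N l| < K^2 for every m ∈ Z and N ≥ 1. -/
/-- `Ω_{K,l}`. -/
def OmegaKl (K l : ℕ) : Set (ℤ → ℤ) := {ω ∈ OmegaK K | aOm K ω = l}

/-- The set of `n < j` with `n + ω n ≥ j` (crossings at level `j`). -/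
noncomputable def Bset (K : ℕ) (ω : ℤ → ℤ) (j : ℤ) : Finset ℤ :=
  (Finset.Ico (j - K) j).filter (fun n => j ≤ n + ω n)

lemma Bset_zero (K : ℕ) (ω : ℤ → ℤ) : (Bset K ω 0).card = aOm K ω := by
  unfold Bset aOm
  refine Finset.card_bij' (fun n _ => -n) (fun k _ => -k) ?_ ?_ ?_ ?_
  · intro n hn
    simp only [Finset.mem_filter, Finset.mem_Ico, Finset.mem_Icc] at hn ⊢
    constructor
    · omega
    · rw [neg_neg]; omega
  · intro k hk
    simp only [Finset.mem_filter, Finset.mem_Icc, Finset.mem_Ico] at hk ⊢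
    omega
  · intro n _; ring
  · intro k _; ring

lemma Bset_step (K : ℕ) (hK : 1 ≤ K) (ω : ℤ → ℤ) (h0 : ∀ n, 0 ≤ ω n) (hB : ∀ n, ω n ≤ K)
    (hbij : Function.Bijective (fun n => n + ω n)) (j : ℤ) :
    (Bset K ω (j + 1)).card = (Bset K ω j).card := by
  obtain ⟨n₀, hn₀⟩ := hbij.2 j
  simp only at hn₀
  have huniq : ∀ n, n + ω n = j → n = n₀ := by
    intro n h
    exact hbij.1 (show n + ω n = n₀ + ω n₀ by rw [h, hn₀])
  by_cases hcase : n₀ = j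
  · have hωj : ω j = 0 := by subst hcase; omega
    have heq : Bset K ω (j + 1) = Bset K ω j := by
      ext n
      simp only [Bset, Finset.mem_filter, Finset.mem_Ico]
      constructor
      · rintro ⟨⟨h1, h2⟩, h3⟩
        have hne : n ≠ j := by rintro rfl; omega
        exact ⟨⟨by omega, by omega⟩, by omega⟩
      · rintro ⟨⟨h1, h2⟩, h3⟩
        have hne : n + ω n ≠ j := by
          intro h
          have := huniq n h
          omega
        have := hB n
        exact ⟨⟨by omega, by omega⟩, by omega⟩
    rw [heq]
  · have hn₀lt : n₀ < j := by have := h0 n₀; omega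
    have hωj : j + 1 ≤ j + ω j := by
      have hne : j + ω j ≠ j := by
        intro h
        exact hcase ((huniq j h).symm ▸ rfl)
      have := h0 j
      omega
    have hmem : n₀ ∈ Bset K ω j := by
      simp only [Bset, Finset.mem_filter, Finset.mem_Ico]
      have := hB n₀
      exact ⟨⟨by omega, hn₀lt⟩, by omega⟩
    have heq : Bset K ω (j + 1) = insert j ((Bset K ω j).erase n₀) := by
      ext n
      simp only [Bset, Finset.mem_insert, Finset.mem_erase, Finset.mem_filter, Finset.mem_Ico]
      constructor
      · rintro ⟨⟨h1, h2⟩, h3⟩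
        by_cases hnj : n = j
        · exact Or.inl hnj
        · refine Or.inr ⟨?_, ⟨by omega, by omega⟩, by omega⟩
          rintro rfl; omega
      · rintro (rfl | ⟨hne, ⟨h1, h2⟩, h3⟩)
        · exact ⟨⟨by omega, by omega⟩, hωj⟩
        · have hne2 : n + ω n ≠ j := by
            intro h
            exact hne (huniq n h)
          have := hB n
          exact ⟨⟨by omega, by omega⟩, by omega⟩
    rw [heq, Finset.card_insert_of_notMem, Finset.card_erase_of_mem hmem]
    · have hpos : 0 < (Bset K ω j).card := Finset.card_pos.mpr ⟨n₀, hmem⟩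
      omega
    · intro h
      have := Finset.mem_of_mem_erase h
      simp only [Bset, Finset.mem_filter, Finset.mem_Ico] at this
      omega

lemma Bset_const (K l : ℕ) (hK : 1 ≤ K) (ω : ℤ → ℤ) (h0 : ∀ n, 0 ≤ ω n) (hB : ∀ n, ω n ≤ K)
    (hbij : Function.Bijective (fun n => n + ω n)) (ha : aOm K ω = l) (j : ℤ) :
    (Bset K ω j).card = l := by
  induction j using Int.induction_on with
  | zero => rw [Bset_zero]; exact ha
  | succ i ih => rw [show ((i : ℤ) + 1) = (i : ℤ) + 1 by ring, Bset_step K hK ω h0 hB hbij]; exact ih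
  | pred i ih =>
    have h2 := Bset_step K hK ω h0 hB hbij (-(i : ℤ) - 1)
    rw [show (-(i:ℤ) - 1 + 1) = -(i:ℤ) by ring] at h2
    omega

/-- The key block-sum estimate. -/
lemma block_sum (K l : ℕ) (hK : 1 ≤ K) (hl : l ≤ K)
    (ω : ℤ → ℤ) (h0 : ∀ n, 0 ≤ ω n) (hB : ∀ n, ω n ≤ K)
    (hbij : Function.Bijective (fun n => n + ω n)) (ha : aOm K ω = l)
    (m : ℤ) (N : ℕ) (hN : 1 ≤ N) :
    |(∑ n ∈ Finset.range N, ω (m + n)) - (N : ℤ) * l| < (K : ℤ) ^ 2 := by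
  have hb := Bset_const K l hK ω h0 hB hbij ha
  set S : Finset ℤ := Finset.Ico m (m + (N : ℤ)) with hS
  set J : Finset ℤ := Finset.Ioc m (m + (N : ℤ) - 1 + K) with hJ
  -- Step A : reindex
  have hA : (∑ n ∈ Finset.range N, ω (m + n)) = ∑ x ∈ S, ω x := by
    refine Finset.sum_nbij' (fun n => m + (n : ℤ)) (fun x => (x - m).toNat) ?_ ?_ ?_ ?_ ?_
    · intro a haa
      simp only [Finset.mem_range] at haa
      simp only [hS, Finset.mem_Ico]
      omega
    · intro x hx
      simp only [hS, Finset.mem_Ico] at hx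
      simp only [Finset.mem_range]
      omega
    · intro a _
      show (m + (a : ℤ) - m).toNat = a
      omega
    · intro x hx
      simp only [hS, Finset.mem_Ico] at hx
      show m + ((x - m).toNat : ℤ) = x
      omega
    · intro a _; rfl
  -- Step B : double counting
  have hBsum : (∑ x ∈ S, ω x)
      = ∑ j ∈ J, ((S.filter (fun n => n < j ∧ j ≤ n + ω n)).card : ℤ) := by
    have h1 : ∀ n ∈ S, ω n
        = ∑ j ∈ J, (if n < j ∧ j ≤ n + ω n then (1 : ℤ) else 0) := by
      intro n hn
      simp only [hS, Finset.mem_Ico] at hn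
      rw [Finset.sum_boole]
      have hfilt : J.filter (fun j => n < j ∧ j ≤ n + ω n) = Finset.Ioc n (n + ω n) := by
        ext j
        simp only [hJ, Finset.mem_filter, Finset.mem_Ioc]
        have := hB n
        constructor
        · rintro ⟨_, h2, h3⟩; exact ⟨h2, h3⟩
        · rintro ⟨h2, h3⟩; exact ⟨⟨by omega, by omega⟩, h2, h3⟩
      rw [hfilt, Int.card_Ioc]
      have := h0 n
      omega
    rw [Finset.sum_congr rfl h1, Finset.sum_comm]
    refine Finset.sum_congr rfl fun j _ => ?_
    rw [Finset.sum_boole]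
  -- bounds on the counts
  have hg_le : ∀ j : ℤ, ((S.filter (fun n => n < j ∧ j ≤ n + ω n)).card : ℤ) ≤ l := by
    intro j
    have hsub : S.filter (fun n => n < j ∧ j ≤ n + ω n) ⊆ Bset K ω j := by
      intro n hn
      simp only [hS, Finset.mem_filter, Finset.mem_Ico, Bset] at hn ⊢
      have := hB n
      exact ⟨⟨by omega, hn.2.1⟩, hn.2.2⟩
    have := Finset.card_le_card hsub
    rw [hb j] at this
    exact_mod_cast this
  have hg_eq : ∀ j : ℤ, m + K ≤ j → j ≤ m + (N : ℤ) →
      ((S.filter (fun n => n < j ∧ j ≤ n + ω n)).card : ℤ) = l := by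
    intro j hj1 hj2
    have hfeq : S.filter (fun n => n < j ∧ j ≤ n + ω n) = Bset K ω j := by
      ext n
      simp only [hS, Finset.mem_filter, Finset.mem_Ico, Bset]
      have := hB n
      constructor
      · rintro ⟨⟨ha1, ha2⟩, hb1, hb2⟩
        exact ⟨⟨by omega, hb1⟩, hb2⟩
      · rintro ⟨⟨ha1, ha2⟩, hb2⟩
        exact ⟨⟨by omega, by omega⟩, ha2, hb2⟩
    rw [hfeq, hb j]
  -- upper bound
  have hcardJ : (J.card : ℤ) = (N : ℤ) + K - 1 := by
    simp only [hJ, Int.card_Ioc]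
    omega
  have hupper : (∑ j ∈ J, ((S.filter (fun n => n < j ∧ j ≤ n + ω n)).card : ℤ))
      ≤ ((N : ℤ) + K - 1) * l := by
    calc _ ≤ ∑ _j ∈ J, (l : ℤ) := Finset.sum_le_sum fun j _ => hg_le j
    _ = (J.card : ℤ) * l := by rw [Finset.sum_const, nsmul_eq_mul]
    _ = ((N : ℤ) + K - 1) * l := by rw [hcardJ]
  -- lower bound
  have hlower : ((N : ℤ) - K + 1) * l
      ≤ ∑ j ∈ J, ((S.filter (fun n => n < j ∧ j ≤ n + ω n)).card : ℤ) := by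
    have hsub : Finset.Icc (m + K) (m + (N : ℤ)) ⊆ J := by
      intro j hj
      simp only [Finset.mem_Icc] at hj
      simp only [hJ, Finset.mem_Ioc]
      omega
    calc ((N : ℤ) - K + 1) * l
        ≤ ((Finset.Icc (m + K) (m + (N : ℤ))).card : ℤ) * l := by
          have h1 : ((N : ℤ) - K + 1) ≤ ((Finset.Icc (m + K) (m + (N : ℤ))).card : ℤ) := by
            rw [Int.card_Icc]
            have := Int.self_le_toNat (m + (N : ℤ) + 1 - (m + K))
            omega
          exact mul_le_mul_of_nonneg_right h1 (by positivity)
      _ = ∑ _j ∈ Finset.Icc (m + K) (m + (N : ℤ)), (l : ℤ) := by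
          rw [Finset.sum_const, nsmul_eq_mul]
      _ = ∑ j ∈ Finset.Icc (m + K) (m + (N : ℤ)),
            ((S.filter (fun n => n < j ∧ j ≤ n + ω n)).card : ℤ) := by
          refine Finset.sum_congr rfl fun j hj => ?_
          simp only [Finset.mem_Icc] at hj
          exact (hg_eq j hj.1 hj.2).symm
      _ ≤ _ := Finset.sum_le_sum_of_subset_of_nonneg hsub (fun j _ _ => by positivity)
  rw [hA, hBsum]
  rw [abs_lt]
  have hlK : (l : ℤ) ≤ K := by exact_mod_cast hl
  have hKK : (1 : ℤ) ≤ K := by exact_mod_cast hK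
  have hl0 : (0 : ℤ) ≤ l := Int.ofNat_nonneg l
  constructor <;> nlinarith [hupper, hlower]

/-- For `ω ∈ Ω_{K,l}`, the averages `(1/N) Σ_{n=0}^{N-1} ω_n` converge to `l`, and
all block sums satisfy `|Σ_{n=m}^{m+N-1} ω_n - N l| < K²`. -/
theorem average_shift (K l : ℕ) (hK : 1 ≤ K) (hl : l ≤ K)
    (ω : ℤ → ℤ) (hω : ω ∈ OmegaKl K l) :
    Filter.Tendsto
      (fun N : ℕ => (∑ n ∈ Finset.range N, (ω (n : ℤ) : ℝ)) / N)
      Filter.atTop (nhds (l : ℝ)) ∧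
    ∀ m : ℤ, ∀ N : ℕ, 1 ≤ N →
      |(∑ n ∈ Finset.range N, ω (m + n)) - (N : ℤ) * l| < (K : ℤ) ^ 2 := by
  obtain ⟨⟨hmem, hbij⟩, ha⟩ := hω
  have h0 : ∀ n, 0 ≤ ω n := fun n => (Finset.mem_Icc.mp (hmem n)).1
  have hBd : ∀ n, ω n ≤ K := fun n => (Finset.mem_Icc.mp (hmem n)).2
  have hblock := block_sum K l hK hl ω h0 hBd hbij ha
  refine ⟨?_, hblock⟩
  -- Part 1: from the block-sum estimate with m = 0
  have hest : ∀ N : ℕ, 1 ≤ N →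
      |(∑ n ∈ Finset.range N, (ω (n : ℤ) : ℝ)) - (N : ℝ) * l| ≤ (K : ℝ) ^ 2 := by
    intro N hN
    have h := hblock 0 N hN
    have hzero : (∑ n ∈ Finset.range N, ω (0 + (n : ℤ))) = ∑ n ∈ Finset.range N, ω (n : ℤ) := by
      refine Finset.sum_congr rfl fun n _ => ?_
      rw [zero_add]
    rw [hzero] at h
    have h' : |((∑ n ∈ Finset.range N, ω (n : ℤ)) : ℝ) - (N : ℝ) * l| ≤ ((K : ℤ) ^ 2 : ℝ) := by
      have := le_of_lt h
      calc |((∑ n ∈ Finset.range N, ω (n : ℤ)) : ℝ) - (N : ℝ) * l|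
          = |(((∑ n ∈ Finset.range N, ω (n : ℤ)) - (N : ℤ) * l : ℤ) : ℝ)| := by
            push_cast; ring_nf
        _ = ((|(∑ n ∈ Finset.range N, ω (n : ℤ)) - (N : ℤ) * l| : ℤ) : ℝ) := by
            rw [Int.cast_abs]
        _ ≤ ((K : ℤ) ^ 2 : ℝ) := by exact_mod_cast this
    calc |(∑ n ∈ Finset.range N, (ω (n : ℤ) : ℝ)) - (N : ℝ) * l|
        = |((∑ n ∈ Finset.range N, ω (n : ℤ)) : ℝ) - (N : ℝ) * l| := by norm_cast
      _ ≤ (K : ℝ) ^ 2 := by exact_mod_cast h'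
  have hsq : Filter.Tendsto
      (fun N : ℕ => (∑ n ∈ Finset.range N, (ω (n : ℤ) : ℝ)) / N - l)
      Filter.atTop (nhds 0) := by
    refine squeeze_zero_norm' ?_ (tendsto_const_div_atTop_nhds_zero_nat ((K : ℝ) ^ 2))
    filter_upwards [Filter.eventually_ge_atTop 1] with N hN
    have hNpos : (0 : ℝ) < N := by exact_mod_cast hN
    rw [Real.norm_eq_abs]
    have : (∑ n ∈ Finset.range N, (ω (n : ℤ) : ℝ)) / N - l
        = ((∑ n ∈ Finset.range N, (ω (n : ℤ) : ℝ)) - (N : ℝ) * l) / N := by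
      field_simp
    rw [this, abs_div, abs_of_pos hNpos]
    gcongr
    exact hest N hN
  have := hsq.add (tendsto_const_nhds (x := (l : ℝ)))
  simpa using this
end

section
/- If ω ∈ Ω_K is periodic with period p, then l := (1/p) Σ_{n=0}^{p−1} ω_n is an integer with 0 ≤ l ≤ K, and a(ω) = l. -/
/-- The window count `T m = {n ∈ [m-K, m] : f n > m}`. -/
private noncomputable def Tst (K : ℕ) (f : ℤ → ℤ) (m : ℤ) : Finset ℤ :=
  (Finset.Icc (m - K) m).filter (fun n => m < f n)

private lemma mem_Tst {K : ℕ} {f : ℤ → ℤ} {m n : ℤ} :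
    n ∈ Tst K f m ↔ (m - K ≤ n ∧ n ≤ m) ∧ m < f n := by
  simp [Tst, Finset.mem_filter, Finset.mem_Icc]

private lemma Tst_step (K : ℕ) (f : ℤ → ℤ) (hle : ∀ n, n ≤ f n)
    (hub : ∀ n, f n ≤ n + K) (hbij : Function.Bijective f) (m : ℤ) :
    (Tst K f m).card = (Tst K f (m + 1)).card := by
  obtain ⟨n₀, hn₀⟩ := hbij.surjective (m + 1)
  apply Finset.card_bij (fun n _ => if f n = m + 1 then m + 1 else n)
  · intro a ha
    rw [mem_Tst] at ha
    split_ifs with h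
    · rw [mem_Tst]
      have h1 : m + 1 ≤ f (m + 1) := hle _
      have h2 : a ≠ m + 1 := by omega
      have h3 : f (m + 1) ≠ m + 1 := by
        intro hcon
        exact h2 (hbij.injective (h.trans hcon.symm))
      refine ⟨⟨by omega, le_refl _⟩, by omega⟩
    · rw [mem_Tst]
      have h1 := hub a
      refine ⟨⟨by omega, by omega⟩, by omega⟩
  · intro a ha b hb hab
    rw [mem_Tst] at ha hb
    split_ifs at hab with h1 h2 h2
    · exact hbij.injective (h1.trans h2.symm)
    · omega
    · omega
    · exact hab
  · intro b hb
    rw [mem_Tst] at hb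
    by_cases hbm : b = m + 1
    · subst hbm
      have h1 : n₀ ≤ f n₀ := hle _
      have h2 : f n₀ ≤ n₀ + K := hub _
      have hne : n₀ ≠ m + 1 := by
        intro h; rw [h] at hn₀; omega
      refine ⟨n₀, ?_, by simp [hn₀]⟩
      rw [mem_Tst]
      refine ⟨⟨by omega, by omega⟩, by omega⟩
    · have h1 := hub b
      have h2 : f b ≠ m + 1 := by omega
      refine ⟨b, ?_, by simp [h2]⟩
      rw [mem_Tst]
      refine ⟨⟨by omega, by omega⟩, by omega⟩

private lemma Tst_const (K : ℕ) (f : ℤ → ℤ) (hle : ∀ n, n ≤ f n)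
    (hub : ∀ n, f n ≤ n + K) (hbij : Function.Bijective f) (m : ℤ) :
    (Tst K f m).card = (Tst K f (-1)).card := by
  suffices h : ∀ j : ℤ, (Tst K f j).card = (Tst K f 0).card by
    rw [h m, ← h (-1)]
  intro j
  induction j using Int.induction_on with
  | zero => rfl
  | succ i ih => rw [← Tst_step K f hle hub hbij i]; exact ih
  | pred i ih =>
      have hs := Tst_step K f hle hub hbij (-(i : ℤ) - 1)
      rw [show (-(i : ℤ) - 1 + 1) = -(i : ℤ) by ring] at hs
      rw [hs]; exact ih

private lemma aOm_eq_Tst (K : ℕ) (ω : ℤ → ℤ)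
    (hub : ∀ n, n + ω n ≤ n + K) :
    aOm K ω = (Tst K (fun n => n + ω n) (-1)).card := by
  apply Finset.card_bij (fun k _ => -k)
  · intro k hk
    simp only [aOm, Finset.mem_filter, Finset.mem_Icc] at hk
    rw [mem_Tst]
    obtain ⟨⟨h1, h2⟩, h3⟩ := hk
    refine ⟨⟨by omega, by omega⟩, by omega⟩
  · intro a _ b _ h; omega
  · intro n hn
    rw [mem_Tst] at hn
    have h1 := hub n
    refine ⟨-n, ?_, by ring⟩
    simp only [aOm, Finset.mem_filter, Finset.mem_Icc, neg_neg]
    obtain ⟨⟨h2, h3⟩, h4⟩ := hn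
    refine ⟨⟨by omega, by omega⟩, by omega⟩

private noncomputable def wcnt (K : ℕ) (f : ℤ → ℤ) (m : ℤ) : ℕ :=
  ((Tst K f m).filter (fun n => 0 ≤ n)).card

private noncomputable def vcnt (K p : ℕ) (f : ℤ → ℤ) (m : ℤ) : ℕ :=
  ((Tst K f m).filter (fun n => (p : ℤ) ≤ n)).card

private noncomputable def ccnt (K p : ℕ) (f : ℤ → ℤ) (m : ℤ) : ℕ :=
  ((Finset.Ico (0 : ℤ) (p : ℤ)).filter (fun n => n ≤ m ∧ m < f n)).card

private lemma ccnt_add_vcnt (K p : ℕ) (f : ℤ → ℤ) (hub : ∀ n, f n ≤ n + K) (m : ℤ) :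
    ccnt K p f m + vcnt K p f m = wcnt K f m := by
  have key := Finset.card_filter_add_card_filter_not
    (s := (Tst K f m).filter (fun n => 0 ≤ n)) (p := fun n => n < (p : ℤ))
  have h1 : ((Tst K f m).filter (fun n => 0 ≤ n)).filter (fun n => n < (p : ℤ))
      = (Finset.Ico (0 : ℤ) (p : ℤ)).filter (fun n => n ≤ m ∧ m < f n) := by
    ext n
    simp only [Finset.mem_filter, mem_Tst, Finset.mem_Ico]
    have := hub n
    constructor
    · rintro ⟨⟨⟨⟨hx1, hx2⟩, hx3⟩, hx4⟩, hx5⟩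
      exact ⟨⟨hx4, hx5⟩, hx2, hx3⟩
    · rintro ⟨⟨hx1, hx2⟩, hx3, hx4⟩
      exact ⟨⟨⟨⟨by omega, hx3⟩, hx4⟩, hx1⟩, hx2⟩
  have h2 : ((Tst K f m).filter (fun n => 0 ≤ n)).filter (fun n => ¬ n < (p : ℤ))
      = (Tst K f m).filter (fun n => (p : ℤ) ≤ n) := by
    ext n
    simp only [Finset.mem_filter, mem_Tst, not_lt]
    constructor
    · rintro ⟨⟨hx1, hx2⟩, hx3⟩; exact ⟨hx1, hx3⟩
    · rintro ⟨hx1, hx2⟩; exact ⟨⟨hx1, by omega⟩, hx2⟩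
  rw [h1, h2] at key
  rw [ccnt, vcnt, wcnt]
  omega

private lemma vcnt_eq_wcnt (K p : ℕ) (f : ℤ → ℤ)
    (hfp : ∀ n : ℤ, f (n - p) = f n - p) (m : ℤ) :
    vcnt K p f m = wcnt K f (m - p) := by
  apply Finset.card_bij (fun n _ => n - (p : ℤ))
  · intro a ha
    simp only [Finset.mem_filter, mem_Tst] at ha ⊢
    have := hfp a
    refine ⟨⟨⟨by omega, by omega⟩, by omega⟩, by omega⟩
  · intro a _ b _ h; omega
  · intro b hb
    simp only [Finset.mem_filter, mem_Tst] at hb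
    refine ⟨b + p, ?_, by ring⟩
    simp only [Finset.mem_filter, mem_Tst]
    have h2 := hfp (b + p)
    rw [show (b + (p:ℤ) - p) = b by ring] at h2
    refine ⟨⟨⟨by omega, by omega⟩, by omega⟩, by omega⟩

private lemma wcnt_eq_zero (K : ℕ) (f : ℤ → ℤ) (m : ℤ) (hm : m < 0) :
    wcnt K f m = 0 := by
  rw [wcnt, Finset.card_eq_zero, Finset.filter_eq_empty_iff]
  intro n hn
  rw [mem_Tst] at hn
  omega

private lemma wcnt_eq_Tst (K : ℕ) (f : ℤ → ℤ) (m : ℤ) (hm : (K : ℤ) ≤ m) :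
    wcnt K f m = (Tst K f m).card := by
  rw [wcnt, Finset.filter_true_of_mem]
  intro n hn
  rw [mem_Tst] at hn
  omega

/-- If `ω ∈ Ω_K` is periodic with period `p`, then `l := (1/p) Σ_{n=0}^{p-1} ω_n`
is an integer with `0 ≤ l ≤ K` and `a(ω) = l`. -/
theorem periodic_average (K : ℕ) (hK : 2 ≤ K) (ω : ℤ → ℤ) (hω : ω ∈ OmegaK K)
    (p : ℕ) (hp : 0 < p) (hper : ∀ n : ℤ, ω (n + p) = ω n) :
    ∃ l : ℤ, 0 ≤ l ∧ l ≤ K ∧ (p : ℤ) * l = ∑ n ∈ Finset.range p, ω (n : ℤ) ∧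
      (aOm K ω : ℤ) = l := by
  obtain ⟨hrange, hbij⟩ := hω
  set f : ℤ → ℤ := fun n => n + ω n with hf
  have hω0 : ∀ n, 0 ≤ ω n := fun n => (Finset.mem_Icc.mp (hrange n)).1
  have hωK : ∀ n, ω n ≤ K := fun n => (Finset.mem_Icc.mp (hrange n)).2
  have hle : ∀ n, n ≤ f n := fun n => by have := hω0 n; simp only [hf]; omega
  have hub : ∀ n, f n ≤ n + K := fun n => by have := hωK n; simp only [hf]; omega
  have hfp : ∀ n : ℤ, f (n - p) = f n - p := by
    intro n
    have h := hper (n - p)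
    rw [show (n - (p:ℤ) + p) = n by ring] at h
    simp only [hf]
    omega
  have hTa : ∀ m : ℤ, (Tst K f m).card = aOm K ω := by
    intro m
    rw [Tst_const K f hle hub hbij m, aOm_eq_Tst K ω (fun n => hub n)]
  -- bound a ≤ K
  have haK : aOm K ω ≤ K := by
    have h1 : aOm K ω ≤ (Finset.Icc (1 : ℤ) (K : ℤ)).card := Finset.card_filter_le _ _
    rw [Int.card_Icc] at h1
    omega
  refine ⟨(aOm K ω : ℤ), Int.natCast_nonneg _, by exact_mod_cast haK, ?_, rfl⟩
  -- main computation
  have hsum0 : ∑ n ∈ Finset.range p, ω (n : ℤ) = ∑ n ∈ Finset.Ico (0 : ℤ) (p : ℤ), ω n := by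
    apply Finset.sum_nbij' (i := fun n : ℕ => (n : ℤ)) (j := fun n : ℤ => n.toNat)
    · intro a ha
      simp only [Finset.mem_range] at ha
      simp only [Finset.mem_Ico]
      omega
    · intro a ha
      simp only [Finset.mem_Ico] at ha
      simp only [Finset.mem_range]
      omega
    · intro a _; simp
    · intro a ha; simp only [Finset.mem_Ico] at ha; omega
    · intro a _; rfl
  have hcard : ∀ n ∈ Finset.Ico (0 : ℤ) (p : ℤ),
      ω n = ∑ m ∈ Finset.Ico (0 : ℤ) ((p : ℤ) + K), (if n ≤ m ∧ m < f n then (1 : ℤ) else 0) := by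
    intro n hn
    simp only [Finset.mem_Ico] at hn
    have h1 : (Finset.Ico (0 : ℤ) ((p : ℤ) + K)).filter (fun m => n ≤ m ∧ m < f n)
        = Finset.Ico n (f n) := by
      ext m
      simp only [Finset.mem_filter, Finset.mem_Ico]
      have := hub n
      constructor
      · rintro ⟨_, hx⟩; exact hx
      · rintro ⟨hx1, hx2⟩; exact ⟨⟨by omega, by omega⟩, hx1, hx2⟩
    have h2 : (((Finset.Ico n (f n)).card : ℕ) : ℤ) = ω n := by
      rw [Int.card_Ico]
      have h4 : f n = n + ω n := rfl
      have h5 := hω0 n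
      omega
    rw [← h2, ← h1, Finset.card_filter, Nat.cast_sum]
    apply Finset.sum_congr rfl
    intro m _
    split_ifs <;> simp
  have hswap : ∑ n ∈ Finset.Ico (0 : ℤ) (p : ℤ), ω n
      = ∑ m ∈ Finset.Ico (0 : ℤ) ((p : ℤ) + K), ((ccnt K p f m : ℕ) : ℤ) := by
    rw [Finset.sum_congr rfl hcard, Finset.sum_comm]
    apply Finset.sum_congr rfl
    intro m _
    rw [ccnt, Finset.card_filter, Nat.cast_sum]
    apply Finset.sum_congr rfl
    intro n _
    split_ifs <;> simp
  -- now the counting identity in ℕ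
  have hIsplit : ∑ m ∈ Finset.Ico (0 : ℤ) ((p : ℤ) + K), wcnt K f m
      = ∑ m ∈ Finset.Ico (0 : ℤ) (K : ℤ), wcnt K f m
        + ∑ m ∈ Finset.Ico (K : ℤ) ((p : ℤ) + K), wcnt K f m := by
    rw [← Finset.sum_union (Finset.Ico_disjoint_Ico_consecutive _ _ _),
      Finset.Ico_union_Ico_eq_Ico (by omega : (0:ℤ) ≤ K) (by omega : (K:ℤ) ≤ (p:ℤ) + K)]
  have hvsum : ∑ m ∈ Finset.Ico (0 : ℤ) ((p : ℤ) + K), vcnt K p f m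
      = ∑ m ∈ Finset.Ico (0 : ℤ) (K : ℤ), wcnt K f m := by
    calc ∑ m ∈ Finset.Ico (0 : ℤ) ((p : ℤ) + K), vcnt K p f m
        = ∑ m ∈ Finset.Ico (0 : ℤ) ((p : ℤ) + K), wcnt K f (m - p) :=
          Finset.sum_congr rfl (fun m _ => vcnt_eq_wcnt K p f hfp m)
      _ = ∑ m ∈ Finset.Ico (-(p : ℤ)) (K : ℤ), wcnt K f m := by
          apply Finset.sum_nbij' (i := fun m : ℤ => m - (p : ℤ)) (j := fun m : ℤ => m + (p : ℤ))
          · intro a ha; simp only [Finset.mem_Ico] at ha ⊢; omega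
          · intro a ha; simp only [Finset.mem_Ico] at ha ⊢; omega
          · intro a _; ring
          · intro a _; ring
          · intro a _; rfl
      _ = ∑ m ∈ Finset.Ico (-(p : ℤ)) (0 : ℤ), wcnt K f m
            + ∑ m ∈ Finset.Ico (0 : ℤ) (K : ℤ), wcnt K f m := by
          rw [← Finset.sum_union (Finset.Ico_disjoint_Ico_consecutive _ _ _),
            Finset.Ico_union_Ico_eq_Ico (by omega : -(p:ℤ) ≤ 0) (by omega : (0:ℤ) ≤ K)]
      _ = ∑ m ∈ Finset.Ico (0 : ℤ) (K : ℤ), wcnt K f m := by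
          rw [Finset.sum_eq_zero, zero_add]
          intro m hm
          simp only [Finset.mem_Ico] at hm
          exact wcnt_eq_zero K f m (by omega)
  have htail : ∑ m ∈ Finset.Ico (K : ℤ) ((p : ℤ) + K), wcnt K f m = p * aOm K ω := by
    calc ∑ m ∈ Finset.Ico (K : ℤ) ((p : ℤ) + K), wcnt K f m
        = ∑ m ∈ Finset.Ico (K : ℤ) ((p : ℤ) + K), aOm K ω := by
          apply Finset.sum_congr rfl
          intro m hm
          simp only [Finset.mem_Ico] at hm
          rw [wcnt_eq_Tst K f m (by omega), hTa]
      _ = (Finset.Ico (K : ℤ) ((p : ℤ) + K)).card * aOm K ω := by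
          rw [Finset.sum_const, smul_eq_mul]
      _ = p * aOm K ω := by
          rw [Int.card_Ico]
          congr 1
          omega
  have hmain : ∑ m ∈ Finset.Ico (0 : ℤ) ((p : ℤ) + K), ccnt K p f m = p * aOm K ω := by
    have h1 : ∑ m ∈ Finset.Ico (0 : ℤ) ((p : ℤ) + K), (ccnt K p f m + vcnt K p f m)
        = ∑ m ∈ Finset.Ico (0 : ℤ) ((p : ℤ) + K), wcnt K f m :=
      Finset.sum_congr rfl (fun m _ => ccnt_add_vcnt K p f hub m)
    rw [Finset.sum_add_distrib, hvsum, hIsplit, htail] at h1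
    omega
  rw [hsum0, hswap, ← Nat.cast_sum, hmain]
  push_cast
  ring
end

section
/- The SFT X_{K,l} is irreducible and aperiodic: the state e = {0,…,l−1} satisfies M(e,e) = 1, and for every state b ∈ B_{K,l} there is a path of allowed transitions from e to b and from b to e. -/
/-- States of the SFT `X_{K,l}`: `l`-element subsets of `{0,…,K-1}`. -/
def ValidState (K l : ℕ) (a : Finset ℕ) : Prop := a ⊆ Finset.range K ∧ a.card = l

/-- Transition relation of `X_{K,l}`. -/
def Mtrans (K : ℕ) (a b : Finset ℕ) : Prop :=
  (0 ∉ a ∧ b = a.image (· - 1)) ∨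
  (0 ∈ a ∧ ∃ j ∈ Finset.range K, j ∉ (a.erase 0).image (· - 1) ∧
      b = insert j ((a.erase 0).image (· - 1)))

/-- Transitions between valid states only. -/
def MtransV (K l : ℕ) (a b : Finset ℕ) : Prop :=
  ValidState K l a ∧ ValidState K l b ∧ Mtrans K a b

open Finset

lemma injOn_sub_one {s : Finset ℕ} (h : 0 ∉ s) : Set.InjOn (· - 1) s := by
  intro x hx y hy hxy
  simp only [Finset.mem_coe] at hx hy
  have hx0 : x ≠ 0 := fun e => h (e ▸ hx)
  have hy0 : y ≠ 0 := fun e => h (e ▸ hy)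
  change x - 1 = y - 1 at hxy
  omega

lemma self_loop (K l : ℕ) (hK : 2 ≤ K) (hl : 1 ≤ l) (hlK : l ≤ K - 1) :
    Mtrans K (Finset.range l) (Finset.range l) := by
  have hjK : l - 1 < K := by omega
  right
  refine ⟨mem_range.mpr hl, l - 1, mem_range.mpr hjK, ?_, ?_⟩
  · simp only [mem_image, mem_erase, mem_range, not_exists]
    rintro y ⟨⟨hy0, hyl⟩, hy⟩
    omega
  · ext x
    simp only [mem_insert, mem_image, mem_erase, mem_range]
    constructor
    · intro hx
      rcases Nat.lt_or_ge x (l - 1) with h | h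
      · exact Or.inr ⟨x + 1, ⟨by omega, by omega⟩, by omega⟩
      · exact Or.inl (by omega)
    · rintro (h | ⟨y, ⟨hy0, hyl⟩, rfl⟩) <;> omega

/-- Every valid state reaches `range l`. -/
lemma to_e (K l : ℕ) (hK : 2 ≤ K) (hl : 1 ≤ l) (hlK : l ≤ K - 1) :
    ∀ b, ValidState K l b →
      Relation.ReflTransGen (MtransV K l) b (Finset.range l) := by
  have H : ∀ n b, ValidState K l b → b.sum id = n →
      Relation.ReflTransGen (MtransV K l) b (Finset.range l) := by
    intro n
    induction n using Nat.strong_induction_on with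
    | _ n ih =>
      intro b hb hsum
      by_cases hbe : b = Finset.range l
      · exact hbe ▸ Relation.ReflTransGen.refl
      obtain ⟨hbK, hbc⟩ := hb
      by_cases h0 : 0 ∈ b
      · -- insert a small j
        set t : Finset ℕ := (b.erase 0).image (· - 1) with ht
        have h0e : (0 : ℕ) ∉ b.erase 0 := notMem_erase 0 b
        have htc : t.card = l - 1 := by
          rw [ht, card_image_of_injOn (injOn_sub_one h0e), card_erase_of_mem h0, hbc]
        have htK : t ⊆ Finset.range K := by
          intro x hx
          rw [ht, mem_image] at hx
          obtain ⟨y, hy, rfl⟩ := hx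
          have := mem_range.mp (hbK (mem_of_mem_erase hy))
          exact mem_range.mpr (by omega)
        -- find j < l - 1 with j ∉ t
        have hj : ∃ j, j < l - 1 ∧ j ∉ t := by
          by_contra hc
          push_neg at hc
          have hsub : Finset.range (l - 1) ⊆ t := fun j hjm =>
            hc j (mem_range.mp hjm)
          have hteq : Finset.range (l - 1) = t :=
            eq_of_subset_of_card_le hsub (by rw [htc, card_range])
          apply hbe
          have hbsub : b ⊆ Finset.range l := by
            intro x hx
            rcases eq_or_ne x 0 with rfl | hx0
            · exact mem_range.mpr hl
            · have hxe : x ∈ b.erase 0 := mem_erase.mpr ⟨hx0, hx⟩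
              have : x - 1 ∈ t := by
                rw [ht]; exact mem_image_of_mem _ hxe
              rw [← hteq, mem_range] at this
              exact mem_range.mpr (by omega)
          exact eq_of_subset_of_card_le hbsub (by rw [card_range, hbc])
        obtain ⟨j, hjl, hjt⟩ := hj
        set a' : Finset ℕ := insert j t with ha'
        have ha'c : a'.card = l := by
          rw [ha', card_insert_of_notMem hjt, htc]; omega
        have ha'K : a' ⊆ Finset.range K := by
          rw [ha']
          exact insert_subset (mem_range.mpr (by omega)) htK
        have hstep : MtransV K l b a' :=
          ⟨⟨hbK, hbc⟩, ⟨ha'K, ha'c⟩,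
            Or.inr ⟨h0, j, mem_range.mpr (by omega), hjt, ha'⟩⟩
        -- sum decreases
        have hsum1 : (b.erase 0).sum id + 0 = b.sum id :=
          Finset.sum_erase_add b id h0
        have hsum2 : t.sum id = ∑ x ∈ b.erase 0, (x - 1) := by
          rw [ht]
          exact Finset.sum_image fun x hx y hy hxy =>
            injOn_sub_one h0e (mem_coe.mpr hx) (mem_coe.mpr hy) hxy
        have hsum3 : ∑ x ∈ b.erase 0, (x - 1) + (l - 1) = (b.erase 0).sum id := by
          have : ∀ x ∈ b.erase 0, id x = (x - 1) + 1 := by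
            intro x hx
            have : x ≠ 0 := (mem_erase.mp hx).1
            simp; omega
          rw [Finset.sum_congr rfl this, Finset.sum_add_distrib,
            Finset.sum_const, card_erase_of_mem h0, hbc, smul_eq_mul, mul_one]
        have hlt : a'.sum id < n := by
          have : a'.sum id = j + t.sum id := by
            rw [ha', Finset.sum_insert hjt]; rfl
          omega
        exact Relation.ReflTransGen.head hstep
          (ih _ hlt a' ⟨ha'K, ha'c⟩ rfl)
      · -- shift everything down
        set a' : Finset ℕ := b.image (· - 1) with ha'
        have ha'c : a'.card = l := by
          rw [ha', card_image_of_injOn (injOn_sub_one h0), hbc]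
        have ha'K : a' ⊆ Finset.range K := by
          intro x hx
          rw [ha', mem_image] at hx
          obtain ⟨y, hy, rfl⟩ := hx
          have := mem_range.mp (hbK hy)
          exact mem_range.mpr (by omega)
        have hstep : MtransV K l b a' :=
          ⟨⟨hbK, hbc⟩, ⟨ha'K, ha'c⟩, Or.inl ⟨h0, ha'⟩⟩
        have hbne : b.Nonempty := card_pos.mp (by omega)
        have hlt : a'.sum id < n := by
          have h1 : a'.sum id = ∑ x ∈ b, (x - 1) := by
            rw [ha']
            exact Finset.sum_image fun x hx y hy hxy =>
              injOn_sub_one h0 (mem_coe.mpr hx) (mem_coe.mpr hy) hxy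
          have h2 : ∑ x ∈ b, (x - 1) < ∑ x ∈ b, x := by
            apply Finset.sum_lt_sum_of_nonempty hbne
            intro x hx
            have : x ≠ 0 := fun e => h0 (e ▸ hx)
            omega
          have h3 : b.sum id = ∑ x ∈ b, x := rfl
          omega
        exact Relation.ReflTransGen.head hstep
          (ih _ hlt a' ⟨ha'K, ha'c⟩ rfl)
  exact fun b hb => H (b.sum id) b hb rfl

/-- `range l` reaches every valid state. -/
lemma from_e (K l : ℕ) (hK : 2 ≤ K) (hl : 1 ≤ l) (hlK : l ≤ K - 1) :
    ∀ b, ValidState K l b →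
      Relation.ReflTransGen (MtransV K l) (Finset.range l) b := by
  have H : ∀ n b, ValidState K l b → b.sum id = n →
      Relation.ReflTransGen (MtransV K l) (Finset.range l) b := by
    intro n
    induction n using Nat.strong_induction_on with
    | _ n ih =>
      intro b hb hsum
      by_cases hbe : b = Finset.range l
      · exact hbe ▸ Relation.ReflTransGen.refl
      obtain ⟨hbK, hbc⟩ := hb
      have hbne : b.Nonempty := card_pos.mp (by omega)
      set j : ℕ := b.max' hbne with hj
      have hjb : j ∈ b := b.max'_mem hbne
      have hjK : j < K := mem_range.mp (hbK hjb)
      have hjl : l ≤ j := by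
        by_contra hc
        push_neg at hc
        apply hbe
        have hbsub : b ⊆ Finset.range l := fun x hx =>
          mem_range.mpr (lt_of_le_of_lt (b.le_max' x hx) hc)
        exact eq_of_subset_of_card_le hbsub (by rw [card_range, hbc])
      set s : Finset ℕ := (b.erase j).image (· + 1) with hs
      have h0s : (0 : ℕ) ∉ s := by
        rw [hs, mem_image]
        rintro ⟨y, hy, h⟩
        omega
      have hsc : s.card = l - 1 := by
        rw [hs, card_image_of_injective _ (fun x y h => by omega),
          card_erase_of_mem hjb, hbc]
      set a' : Finset ℕ := insert 0 s with ha'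
      have ha'c : a'.card = l := by
        rw [ha', card_insert_of_notMem h0s, hsc]; omega
      have ha'K : a' ⊆ Finset.range K := by
        rw [ha']
        refine insert_subset (mem_range.mpr (by omega)) ?_
        intro x hx
        rw [hs, mem_image] at hx
        obtain ⟨y, hy, rfl⟩ := hx
        have h1 : y ≠ j := (mem_erase.mp hy).1
        have h2 : y ≤ j := b.le_max' y (mem_of_mem_erase hy)
        exact mem_range.mpr (by omega)
      have himg : (a'.erase 0).image (· - 1) = b.erase j := by
        rw [ha', erase_insert h0s, hs, image_image]
        have : ((· - 1) ∘ (· + 1) : ℕ → ℕ) = id := by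
          funext x; simp
        rw [this, image_id]
      have hstep : MtransV K l a' b := by
        refine ⟨⟨ha'K, ha'c⟩, ⟨hbK, hbc⟩,
          Or.inr ⟨mem_insert_self 0 s, j, mem_range.mpr hjK, ?_, ?_⟩⟩
        · rw [himg]; exact notMem_erase j b
        · rw [himg, insert_erase hjb]
      have hlt : a'.sum id < n := by
        have hsum1 : (b.erase j).sum id + j = b.sum id :=
          Finset.sum_erase_add b id hjb
        have hsum2 : s.sum id = ∑ x ∈ b.erase j, (x + 1) := by
          rw [hs]
          exact Finset.sum_image fun x hx y hy hxy => by omega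
        have hsum3 : ∑ x ∈ b.erase j, (x + 1) =
            (b.erase j).sum id + (l - 1) := by
          rw [Finset.sum_add_distrib, Finset.sum_const,
            card_erase_of_mem hjb, hbc, smul_eq_mul, mul_one]; rfl
        have hsum4 : a'.sum id = 0 + s.sum id := by
          rw [ha', Finset.sum_insert h0s]; rfl
        omega
      exact Relation.ReflTransGen.tail (ih _ hlt a' ⟨ha'K, ha'c⟩ rfl) hstep
  exact fun b hb => H (b.sum id) b hb rfl

/-- `X_{K,l}` is irreducible and aperiodic: the state `e = {0,…,l-1}` has a self-loop,
and every state is connected to and from `e` by paths of allowed transitions. -/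
theorem XKl_irreducible_aperiodic (K l : ℕ) (hK : 2 ≤ K) (hl : 1 ≤ l) (hlK : l ≤ K - 1) :
    Mtrans K (Finset.range l) (Finset.range l) ∧
    ∀ b : Finset ℕ, ValidState K l b →
      Relation.ReflTransGen (MtransV K l) (Finset.range l) b ∧
      Relation.ReflTransGen (MtransV K l) b (Finset.range l) := by
  exact ⟨self_loop K l hK hl hlK,
    fun b hb => ⟨from_e K l hK hl hlK b hb, to_e K l hK hl hlK b hb⟩⟩
end

section
/- The topological entropy of Ω_{K,l} satisfies (1 − l/K)·log(l+1) ≤ h(Ω_{K,l}) ≤ log(l+1) for all 0 < l < K; hence lim_{K→∞} h(Ω_{K,l}) = log(l+1) for every fixed l ≥ 1. -/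
set_option linter.unusedSectionVars false


/-- Topological entropy of a subshift of `ℤ^ℤ`: exponential growth rate of the
number of words of length `N`. -/
noncomputable def ent1 (Ω : Set (ℤ → ℤ)) : ℝ :=
  Filter.limsup (fun N : ℕ =>
    Real.log (Nat.card {w : Fin N → ℤ // ∃ ω ∈ Ω, ∀ i : Fin N, w i = ω ((i : ℕ) : ℤ)}) / N)
    Filter.atTop

/-- Crossing set at edge `n`. -/
noncomputable def Sset (K : ℕ) (ω : ℤ → ℤ) (n : ℤ) : Finset ℤ :=
  (Finset.Icc (n - K) (n - 1)).filter (fun m => n ≤ m + ω m)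

section cross

variable {K : ℕ} {ω : ℤ → ℤ} (hr : ∀ n, ω n ∈ Finset.Icc (0 : ℤ) (K : ℤ))

theorem mem_Sset {n m : ℤ} : m ∈ Sset K ω n ↔ (n - K ≤ m ∧ m ≤ n - 1) ∧ n ≤ m + ω m := by
  simp [Sset, Finset.mem_filter, Finset.mem_Icc]

include hr

omit hr in
theorem Sset_not_mem_self (n : ℤ) : n ∉ Sset K ω n := by
  intro h
  rw [mem_Sset] at h
  omega

theorem m0_mem (n m0 : ℤ) (h : m0 + ω m0 = n) : m0 ∈ insert n (Sset K ω n) := by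
  have h1 := hr m0
  rw [Finset.mem_Icc] at h1
  rcases eq_or_ne m0 n with rfl | hne
  · exact Finset.mem_insert_self _ _
  · refine Finset.mem_insert_of_mem (mem_Sset.2 ⟨⟨by omega, by omega⟩, by omega⟩)

theorem Sset_step (hinj : Function.Injective (fun n => n + ω n)) (n m0 : ℤ)
    (h : m0 + ω m0 = n) : Sset K ω (n + 1) = (insert n (Sset K ω n)).erase m0 := by
  ext m
  have h1 := hr m
  rw [Finset.mem_Icc] at h1
  constructor
  · intro hm
    rw [mem_Sset] at hm
    have hmn : m ≠ m0 := by
      intro rfl'; subst rfl'; omega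
    rw [Finset.mem_erase]
    refine ⟨hmn, ?_⟩
    rcases eq_or_ne m n with rfl | hmn'
    · exact Finset.mem_insert_self _ _
    · exact Finset.mem_insert_of_mem (mem_Sset.2 ⟨⟨by omega, by omega⟩, by omega⟩)
  · intro hm
    rw [Finset.mem_erase, Finset.mem_insert] at hm
    obtain ⟨hne, hm⟩ := hm
    have hnm : m + ω m ≠ n := by
      intro he
      exact hne (hinj (show (fun n => n + ω n) m = (fun n => n + ω n) m0 by simp only []; rw [he, h]))
    have hm' : (m = n) ∨ ((n - K ≤ m ∧ m ≤ n - 1) ∧ n ≤ m + ω m) := by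
      rcases hm with h' | h'
      · exact Or.inl h'
      · exact Or.inr (mem_Sset.1 h')
    refine mem_Sset.2 ⟨⟨?_, ?_⟩, ?_⟩ <;> rcases hm' with h' | h' <;> omega

theorem Sset_card_step (hb : Function.Bijective (fun n => n + ω n)) (n : ℤ) :
    (Sset K ω (n + 1)).card = (Sset K ω n).card := by
  obtain ⟨m0, hm0⟩ := hb.2 n
  rw [Sset_step hr hb.1 n m0 hm0]
  rw [Finset.card_erase_of_mem (m0_mem hr n m0 hm0),
    Finset.card_insert_of_notMem (Sset_not_mem_self n)]
  omega

theorem Sset_card_const (hb : Function.Bijective (fun n => n + ω n)) (n : ℤ) :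
    (Sset K ω n).card = (Sset K ω 0).card := by
  induction n using Int.induction_on with
  | zero => rfl
  | succ k ih => rw [Sset_card_step hr hb]; exact ih
  | pred k ih =>
    have h2 := Sset_card_step hr hb (-(k:ℤ) - 1)
    rw [show -(k:ℤ) - 1 + 1 = -(k:ℤ) by ring] at h2
    rw [← h2]; exact ih

omit hr in
theorem Sset_zero_card : (Sset K ω 0).card = aOm K ω := by
  unfold aOm
  apply Finset.card_bij (fun m _ => -m)
  · intro m hm
    rw [mem_Sset] at hm
    rw [Finset.mem_filter, Finset.mem_Icc]
    refine ⟨⟨by omega, by omega⟩, ?_⟩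
    rw [neg_neg]; omega
  · intro a ha b hb hab; omega
  · intro k hk
    rw [Finset.mem_filter, Finset.mem_Icc] at hk
    exact ⟨-k, mem_Sset.2 ⟨⟨by omega, by omega⟩, by omega⟩, by omega⟩

theorem Sset_card_eq (hb : Function.Bijective (fun n => n + ω n)) {l : ℕ} (ha : aOm K ω = l)
    (n : ℤ) : (Sset K ω n).card = l := by
  rw [Sset_card_const hr hb, Sset_zero_card]; exact ha

end cross

/-! ## Words -/

def WordN (Ω : Set (ℤ → ℤ)) (N : ℕ) :=
  {w : Fin N → ℤ // ∃ ω ∈ Ω, ∀ i : Fin N, w i = ω ((i : ℕ) : ℤ)}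

noncomputable instance (K l N : ℕ) : Fintype (WordN (OmegaKl K l) N) := by
  have hinj : Function.Injective
      (fun w : WordN (OmegaKl K l) N => fun i : Fin N =>
        (⟨w.1 i, by
          obtain ⟨ω, hω, hωw⟩ := w.2
          rw [hωw i]; exact hω.1.1 _⟩ : Finset.Icc (0:ℤ) (K:ℤ))) := by
    intro w1 w2 h
    apply Subtype.ext
    funext i
    have := congrFun h i
    exact congrArg Subtype.val this
  exact Fintype.ofInjective _ hinj

/-! ## Upper bound encoding -/

noncomputable def rankAt (K : ℕ) (ω : ℤ → ℤ) (n : ℤ) : ℕ :=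
  ((insert n (Sset K ω n)).sort (· ≤ ·)).idxOf (Function.invFun (fun m => m + ω m) n)

section rank

variable {K l : ℕ} {ω : ℤ → ℤ} (hr : ∀ n, ω n ∈ Finset.Icc (0 : ℤ) (K : ℤ))
  (hb : Function.Bijective (fun n => n + ω n)) (ha : aOm K ω = l)

include hr hb ha in
theorem insert_Sset_card (n : ℤ) : (insert n (Sset K ω n)).card = l + 1 := by
  rw [Finset.card_insert_of_notMem (Sset_not_mem_self n), Sset_card_eq hr hb ha]

include hr hb in
theorem invFun_mem (n : ℤ) :
    Function.invFun (fun m => m + ω m) n ∈ insert n (Sset K ω n) := by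
  have h := Function.rightInverse_invFun hb.2 n
  exact m0_mem hr n _ h

include hr hb ha in
theorem rankAt_lt (n : ℤ) : rankAt K ω n < l + 1 := by
  rw [← insert_Sset_card hr hb ha n, ← Finset.length_sort (α := ℤ) (· ≤ ·)]
  exact List.idxOf_lt_length_iff.2 ((Finset.mem_sort _).2 (invFun_mem hr hb n))

end rank

section encode

variable (K l N : ℕ)

abbrev CodeT : Type :=
  (Fin K → Finset.Icc (0:ℤ) (K:ℤ)) × (Fin (N - K) → Fin (l + 1)) × (Fin K → Finset.Icc (0:ℤ) (K:ℤ))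

noncomputable def encode (w : WordN (OmegaKl K l) N) : CodeT K l N :=
  let ω := w.2.choose
  have hω : ω ∈ OmegaKl K l := w.2.choose_spec.1
  ( fun i => ⟨ω ((i : ℕ) : ℤ), hω.1.1 _⟩,
    fun j => ⟨rankAt K ω ((K : ℤ) + (j : ℕ)), rankAt_lt hω.1.1 hω.1.2 hω.2 _⟩,
    fun i => ⟨ω ((N : ℤ) - K + (i : ℕ)), hω.1.1 _⟩ )

end encode

section inj

variable {K l N : ℕ}

theorem m0_determined {ω1 ω2 : ℤ → ℤ}
    (hr1 : ∀ n, ω1 n ∈ Finset.Icc (0 : ℤ) (K : ℤ)) (hb1 : Function.Bijective (fun n => n + ω1 n))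
    (hr2 : ∀ n, ω2 n ∈ Finset.Icc (0 : ℤ) (K : ℤ)) (hb2 : Function.Bijective (fun n => n + ω2 n))
    (n : ℤ) (hS : Sset K ω1 n = Sset K ω2 n) (hrank : rankAt K ω1 n = rankAt K ω2 n) :
    Function.invFun (fun m => m + ω1 m) n = Function.invFun (fun m => m + ω2 m) n := by
  have hm1 : Function.invFun (fun m => m + ω1 m) n ∈
      ((insert n (Sset K ω2 n)).sort (· ≤ ·)) := by
    rw [Finset.mem_sort, ← hS]; exact invFun_mem hr1 hb1 n
  have hm2 : Function.invFun (fun m => m + ω2 m) n ∈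
      ((insert n (Sset K ω2 n)).sort (· ≤ ·)) := by
    rw [Finset.mem_sort]; exact invFun_mem hr2 hb2 n
  unfold rankAt at hrank
  rw [hS] at hrank
  exact (List.idxOf_inj hm1).1 hrank

theorem encode_injective (hK : 0 < K) (hKN : 2 * K ≤ N) :
    Function.Injective (encode K l N) := by
  intro w1 w2 henc
  simp only [encode] at henc
  rw [Prod.mk.injEq, Prod.mk.injEq] at henc
  obtain ⟨e1, e2, e3⟩ := henc
  set ω1 := w1.2.choose with hω1def
  set ω2 := w2.2.choose with hω2def
  have hmem1 : ω1 ∈ OmegaKl K l := w1.2.choose_spec.1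
  have hmem2 : ω2 ∈ OmegaKl K l := w2.2.choose_spec.1
  have hval1 : ∀ i : Fin N, w1.1 i = ω1 ((i : ℕ) : ℤ) := w1.2.choose_spec.2
  have hval2 : ∀ i : Fin N, w2.1 i = ω2 ((i : ℕ) : ℤ) := w2.2.choose_spec.2
  obtain ⟨⟨hr1, hb1⟩, ha1⟩ := hmem1
  obtain ⟨⟨hr2, hb2⟩, ha2⟩ := hmem2
  have h1 : ∀ i : Fin K, ω1 ((i : ℕ) : ℤ) = ω2 ((i : ℕ) : ℤ) := by
    intro i; exact congrArg Subtype.val (congrFun e1 i)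
  have h2 : ∀ j : Fin (N - K), rankAt K ω1 ((K : ℤ) + (j : ℕ)) = rankAt K ω2 ((K : ℤ) + (j : ℕ)) := by
    intro j; exact congrArg Fin.val (congrFun e2 j)
  have h3 : ∀ i : Fin K, ω1 ((N : ℤ) - K + (i : ℕ)) = ω2 ((N : ℤ) - K + (i : ℕ)) := by
    intro i; exact congrArg Subtype.val (congrFun e3 i)
  have hagree : ∀ m : ℤ, 0 ≤ m → m < K → ω1 m = ω2 m := by
    intro m h0 hmK
    have := h1 ⟨m.toNat, by omega⟩
    simpa [Int.toNat_of_nonneg h0] using this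
  -- the inductive determination of the crossing sets
  have keyS : ∀ j : ℕ, K + j ≤ N → Sset K ω1 ((K : ℤ) + j) = Sset K ω2 ((K : ℤ) + j) := by
    intro j
    induction j with
    | zero =>
      intro _
      ext m
      rw [mem_Sset, mem_Sset]
      constructor <;> intro hm <;>
      · have h0 : (0 : ℤ) ≤ m := by omega
        have hltK : m < (K : ℤ) := by omega
        have hω := hagree m h0 hltK
        refine ⟨⟨by omega, by omega⟩, by omega⟩
    | succ j ih =>
      intro hj
      have hSj := ih (by omega)
      have hjN : j < N - K := by omega
      have hrank := h2 ⟨j, hjN⟩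
      simp only [Fin.val_mk] at hrank
      have hinv := m0_determined hr1 hb1 hr2 hb2 _ hSj hrank
      have hre1 : (Function.invFun (fun m => m + ω1 m) ((K : ℤ) + j)) + ω1 _ = (K : ℤ) + j :=
        Function.rightInverse_invFun hb1.2 ((K : ℤ) + j)
      have hre2 : (Function.invFun (fun m => m + ω2 m) ((K : ℤ) + j)) + ω2 _ = (K : ℤ) + j :=
        Function.rightInverse_invFun hb2.2 ((K : ℤ) + j)
      have e1' := Sset_step hr1 hb1.1 ((K : ℤ) + j) _ hre1
      have e2' := Sset_step hr2 hb2.1 ((K : ℤ) + j) _ hre2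
      have hcast : ((K : ℤ) + ((j + 1 : ℕ) : ℤ)) = ((K : ℤ) + j) + 1 := by push_cast; ring
      rw [hcast, e1', e2', hSj, hinv]
  -- conclude equality of the words
  apply Subtype.ext
  funext i
  rw [hval1 i, hval2 i]
  rcases lt_or_ge (i : ℕ) K with hiK | hiK
  · exact h1 ⟨(i : ℕ), hiK⟩
  rcases le_or_gt (N - K) (i : ℕ) with hiNK | hiNK
  · have hi2 : (i : ℕ) - (N - K) < K := by omega
    have := h3 ⟨(i : ℕ) - (N - K), hi2⟩
    have hcast : ((N : ℤ) - K + (((i : ℕ) - (N - K) : ℕ) : ℤ)) = ((i : ℕ) : ℤ) := by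
      have hiN := i.isLt; omega
    rw [hcast] at this
    exact this
  · -- middle region
    set t : ℤ := ((i : ℕ) : ℤ) + ω1 ((i : ℕ) : ℤ) with htdef
    have hri := hr1 ((i : ℕ) : ℤ)
    rw [Finset.mem_Icc] at hri
    have htK : (K : ℤ) ≤ t := by omega
    have htN : t < (N : ℤ) := by omega
    set j : ℕ := (t - K).toNat with hjdef
    have hjcast : ((K : ℤ) + (j : ℤ)) = t := by omega
    have hjN : j < N - K := by omega
    have hS := keyS j (by omega)
    have hrank := h2 ⟨j, hjN⟩
    simp only [Fin.val_mk] at hrank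
    rw [hjcast] at hS hrank
    have hinv := m0_determined hr1 hb1 hr2 hb2 t hS hrank
    have hleft : Function.invFun (fun m => m + ω1 m) t = ((i : ℕ) : ℤ) := by
      have := Function.leftInverse_invFun hb1.1 ((i : ℕ) : ℤ)
      simpa [htdef] using this
    rw [hleft] at hinv
    have := Function.rightInverse_invFun hb2.2 t
    rw [← hinv] at this
    omega

end inj

theorem card_words_le (K l N : ℕ) (hK : 0 < K) (hKN : 2 * K ≤ N) :
    Nat.card (WordN (OmegaKl K l) N) ≤ (K+1)^K * ((l+1)^(N-K) * (K+1)^K) := by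
  have hle : Nat.card (WordN (OmegaKl K l) N) ≤ Nat.card (CodeT K l N) :=
    Nat.card_le_card_of_injective _ (encode_injective hK hKN)
  have hIcc : Fintype.card (Finset.Icc (0:ℤ) (K:ℤ)) = K + 1 := by
    rw [Fintype.card_coe, Int.card_Icc]
    omega
  have hcard : Nat.card (CodeT K l N) = (K+1)^K * ((l+1)^(N-K) * (K+1)^K) := by
    rw [Nat.card_eq_fintype_card]
    rw [Fintype.card_prod, Fintype.card_prod, Fintype.card_fun, Fintype.card_fun, hIcc]
    simp [Fintype.card_fin]
  omega

/-! ## Lower bound: the queue construction -/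

def selIdx (K l : ℕ) (cc : ℕ → ℕ) (p : ℕ) : ℕ := if p < K - l then cc p % (l + 1) else 0

noncomputable def Qset (K l : ℕ) (cc : ℕ → ℕ) : ℕ → Finset ℤ
  | 0 => Finset.Icc (-(l : ℤ)) (-1)
  | p + 1 =>
      let R := insert ((p : ℕ) : ℤ) (Qset K l cc p)
      R.erase ((R.sort (· ≤ ·)).getD (selIdx K l cc p) 0)

noncomputable def gsel (K l : ℕ) (cc : ℕ → ℕ) (p : ℕ) : ℤ :=
  ((insert ((p : ℕ) : ℤ) (Qset K l cc p)).sort (· ≤ ·)).getD (selIdx K l cc p) 0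

theorem Qset_succ (K l : ℕ) (cc : ℕ → ℕ) (p : ℕ) :
    Qset K l cc (p + 1) = (insert ((p : ℕ) : ℤ) (Qset K l cc p)).erase (gsel K l cc p) := rfl

section queue

variable {K l : ℕ} (hl : 0 < l) (hlK : l < K) (cc : ℕ → ℕ)

theorem selIdx_lt (p : ℕ) : selIdx K l cc p < l + 1 := by
  unfold selIdx
  split
  · exact Nat.mod_lt _ (by omega)
  · omega

include hl hlK

theorem Qset_card_sub (p : ℕ) :
    (Qset K l cc p).card = l ∧ Qset K l cc p ⊆ Finset.Icc (-(l : ℤ)) ((p : ℤ) - 1) := by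
  induction p with
  | zero =>
    constructor
    · rw [show Qset K l cc 0 = Finset.Icc (-(l:ℤ)) (-1) from rfl, Int.card_Icc]; omega
    · intro x hx; exact hx
  | succ p ih =>
    obtain ⟨hcard, hsub⟩ := ih
    have hpnot : ((p : ℕ) : ℤ) ∉ Qset K l cc p := by
      intro h; have := hsub h; rw [Finset.mem_Icc] at this; omega
    have hcardR : (insert ((p : ℕ) : ℤ) (Qset K l cc p)).card = l + 1 := by
      rw [Finset.card_insert_of_notMem hpnot, hcard]
    have hselmem : gsel K l cc p ∈ insert ((p : ℕ) : ℤ) (Qset K l cc p) := by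
      unfold gsel
      have hlen : ((insert ((p : ℕ) : ℤ) (Qset K l cc p)).sort (· ≤ ·)).length = l + 1 := by
        rw [Finset.length_sort, hcardR]
      have hidx : selIdx K l cc p < ((insert ((p : ℕ) : ℤ) (Qset K l cc p)).sort (· ≤ ·)).length := by
        rw [hlen]; exact selIdx_lt cc p
      rw [List.getD_eq_getElem _ _ hidx]
      exact (Finset.mem_sort _).1 (List.getElem_mem hidx)
    constructor
    · rw [Qset_succ, Finset.card_erase_of_mem hselmem, hcardR]
      omega
    · rw [Qset_succ]
      intro x hx
      rw [Finset.mem_erase, Finset.mem_insert] at hx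
      rw [Finset.mem_Icc]
      rcases hx.2 with rfl | hx2
      · constructor <;> push_cast <;> omega
      · have := hsub hx2; rw [Finset.mem_Icc] at this; constructor <;> push_cast <;> omega

theorem gsel_mem (p : ℕ) : gsel K l cc p ∈ insert ((p : ℕ) : ℤ) (Qset K l cc p) := by
  obtain ⟨hcard, hsub⟩ := Qset_card_sub hl hlK cc p
  have hpnot : ((p : ℕ) : ℤ) ∉ Qset K l cc p := by
    intro h; have := hsub h; rw [Finset.mem_Icc] at this; omega
  have hcardR : (insert ((p : ℕ) : ℤ) (Qset K l cc p)).card = l + 1 := by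
    rw [Finset.card_insert_of_notMem hpnot, hcard]
  unfold gsel
  have hlen : ((insert ((p : ℕ) : ℤ) (Qset K l cc p)).sort (· ≤ ·)).length = l + 1 := by
    rw [Finset.length_sort, hcardR]
  have hidx : selIdx K l cc p < ((insert ((p : ℕ) : ℤ) (Qset K l cc p)).sort (· ≤ ·)).length := by
    rw [hlen]; exact selIdx_lt cc p
  rw [List.getD_eq_getElem _ _ hidx]
  exact (Finset.mem_sort _).1 (List.getElem_mem hidx)

theorem gsel_le (p : ℕ) : gsel K l cc p ≤ (p : ℤ) := by
  have h := gsel_mem hl hlK cc p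
  rw [Finset.mem_insert] at h
  rcases h with h | h
  · omega
  · have := (Qset_card_sub hl hlK cc p).2 h; rw [Finset.mem_Icc] at this; omega

omit hl hlK in
theorem gsel_cleanup (p : ℕ) (hp : K - l ≤ p) :
    gsel K l cc p = (insert ((p : ℕ) : ℤ) (Qset K l cc p)).min'
      ⟨_, Finset.mem_insert_self _ _⟩ := by
  unfold gsel
  rw [show selIdx K l cc p = 0 from if_neg (by omega)]
  have hne : (insert ((p : ℕ) : ℤ) (Qset K l cc p)).Nonempty := ⟨_, Finset.mem_insert_self _ _⟩
  have hlen : 0 < ((insert ((p : ℕ) : ℤ) (Qset K l cc p)).sort (· ≤ ·)).length := by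
    rw [Finset.length_sort]
    exact Finset.card_pos.2 hne
  rw [List.getD_eq_getElem _ _ hlen]
  exact Finset.sorted_zero_eq_min'

theorem Qset_cleanup_lb : ∀ i ≤ l, ∀ x ∈ Qset K l cc (K - l + i), -(l : ℤ) + i ≤ x := by
  intro i
  induction i with
  | zero =>
    intro _ x hx
    have := (Qset_card_sub hl hlK cc (K - l)).2 hx
    rw [Finset.mem_Icc] at this
    omega
  | succ i ih =>
    intro hi x hx
    rw [show K - l + (i + 1) = (K - l + i) + 1 from rfl, Qset_succ] at hx
    rw [Finset.mem_erase, Finset.mem_insert] at hx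
    obtain ⟨hne, hx⟩ := hx
    set R := insert (((K - l + i : ℕ)) : ℤ) (Qset K l cc (K - l + i)) with hR
    have hmin : gsel K l cc (K - l + i) = R.min' ⟨_, Finset.mem_insert_self _ _⟩ :=
      gsel_cleanup cc _ (by omega)
    have hminlb : -(l : ℤ) + i ≤ R.min' ⟨_, Finset.mem_insert_self _ _⟩ := by
      have hmem := R.min'_mem ⟨_, Finset.mem_insert_self _ _⟩
      rcases Finset.mem_insert.1 hmem with h | h
      · rw [h]; push_cast; omega
      · exact ih (by omega) _ h
    have hxmem : x ∈ R := Finset.mem_insert.2 hx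
    have hge : R.min' ⟨_, Finset.mem_insert_self _ _⟩ ≤ x := Finset.min'_le _ _ hxmem
    have : x ≠ R.min' ⟨_, Finset.mem_insert_self _ _⟩ := by rw [← hmin]; exact hne
    omega

theorem gsel_lb (p : ℕ) (hp : p < K) : (p : ℤ) - K ≤ gsel K l cc p := by
  rcases lt_or_ge p (K - l) with h | h
  · have hmem := gsel_mem hl hlK cc p
    rw [Finset.mem_insert] at hmem
    rcases hmem with h' | h'
    · omega
    · have := (Qset_card_sub hl hlK cc p).2 h'
      rw [Finset.mem_Icc] at this
      omega
  · have hi : p = K - l + (p - (K - l)) := by omega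
    have hmem := gsel_mem hl hlK cc p
    rw [Finset.mem_insert] at hmem
    rcases hmem with h' | h'
    · omega
    · rw [hi] at h'
      have h2 := Qset_cleanup_lb hl hlK cc (p - (K - l)) (by omega) _ h'
      rw [← hi] at h2
      omega

theorem gsel_not_mem_later : ∀ p r, p < r → gsel K l cc p ∉ Qset K l cc r := by
  intro p r
  induction r with
  | zero => omega
  | succ r ih =>
    intro hpr
    rcases Nat.lt_or_ge p r with h | h
    · rw [Qset_succ]
      intro hmem
      rw [Finset.mem_erase, Finset.mem_insert] at hmem
      rcases hmem.2 with he | he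
      · have := gsel_le hl hlK cc p; omega
      · exact ih h he
    · have : p = r := by omega
      subst this
      rw [Qset_succ]
      exact Finset.notMem_erase _ _

theorem gsel_inj {p q : ℕ} (hpq : p < q) : gsel K l cc p ≠ gsel K l cc q := by
  intro he
  have hq := gsel_mem hl hlK cc q
  rw [Finset.mem_insert] at hq
  rcases hq with h | h
  · have := gsel_le hl hlK cc p; omega
  · exact gsel_not_mem_later hl hlK cc p q hpq (by rw [he]; exact h)

theorem Qset_smalls : ∀ i ≤ l,
    Finset.Icc ((K : ℤ) - l) ((K : ℤ) - l + i - 1) ⊆ Qset K l cc (K - l + i) ∧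
    ((Qset K l cc (K - l + i)).filter (· < (K : ℤ) - l)).card = l - i := by
  intro i
  induction i with
  | zero =>
    intro _
    rw [show K - l + 0 = K - l from rfl, show l - 0 = l from rfl]
    constructor
    · intro x hx; rw [Finset.mem_Icc] at hx; omega
    · obtain ⟨hcard, hsub⟩ := Qset_card_sub hl hlK cc (K - l)
      rw [Finset.filter_true_of_mem, hcard]
      intro x hx
      have := hsub hx; rw [Finset.mem_Icc] at this
      show x < (K : ℤ) - l
      push_cast at this ⊢
      omega
  | succ i ih =>
    intro hi
    obtain ⟨hicc, hcnt⟩ := ih (by omega)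
    set p := K - l + i with hp
    set R := insert ((p : ℕ) : ℤ) (Qset K l cc p) with hR
    have hRne : R.Nonempty := ⟨_, Finset.mem_insert_self _ _⟩
    have hmin : gsel K l cc p = R.min' hRne := gsel_cleanup cc _ (by omega)
    -- there exists a small element
    have hsmallne : ∃ s ∈ Qset K l cc p, s < (K : ℤ) - l := by
      have : 0 < ((Qset K l cc p).filter (· < (K : ℤ) - l)).card := by omega
      obtain ⟨s, hs⟩ := Finset.card_pos.1 this
      rw [Finset.mem_filter] at hs
      exact ⟨s, hs.1, hs.2⟩
    obtain ⟨s, hsmem, hslt⟩ := hsmallne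
    have hminlt : R.min' hRne < (K : ℤ) - l :=
      lt_of_le_of_lt (Finset.min'_le _ _ (Finset.mem_insert.2 (Or.inr hsmem))) hslt
    have hminQ : R.min' hRne ∈ Qset K l cc p := by
      have hmem := R.min'_mem hRne
      rcases Finset.mem_insert.1 hmem with h | h
      · exfalso; rw [h] at hminlt; push_cast at hminlt; omega
      · exact h
    constructor
    · intro x hx
      rw [Finset.mem_Icc] at hx
      rw [show K - l + (i + 1) = p + 1 from rfl, Qset_succ, Finset.mem_erase, Finset.mem_insert]
      push_cast at hx
      constructor
      · rw [hmin]; omega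
      · rcases eq_or_lt_of_le hx.2 with he | hlt
        · left; push_cast; omega
        · right
          apply hicc
          rw [Finset.mem_Icc]
          push_cast
          omega
    · rw [show K - l + (i + 1) = p + 1 from rfl, Qset_succ, ← hR, hmin]
      rw [Finset.filter_erase]
      rw [Finset.card_erase_of_mem]
      · have : (R.filter (· < (K : ℤ) - l)).card = l - i := by
          rw [hR, Finset.filter_insert, if_neg (by push_cast; omega), hcnt]
        rw [this]
        omega
      · rw [Finset.mem_filter]
        exact ⟨R.min'_mem hRne, hminlt⟩

theorem Qset_final : Qset K l cc K = Finset.Icc ((K : ℤ) - l) ((K : ℤ) - 1) := by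
  obtain ⟨hicc, _⟩ := Qset_smalls hl hlK cc l le_rfl
  have hKeq : K - l + l = K := by omega
  rw [hKeq] at hicc
  have hiccK : Finset.Icc ((K : ℤ) - l) ((K : ℤ) - l + l - 1) = Finset.Icc ((K : ℤ) - l) ((K : ℤ) - 1) := by
    congr 1; ring
  rw [hiccK] at hicc
  symm
  apply Finset.eq_of_subset_of_card_le hicc
  rw [(Qset_card_sub hl hlK cc K).1, Int.card_Icc]
  omega

theorem gsel_range (p : ℕ) (hp : p < K) :
    gsel K l cc p ∈ Finset.Icc (-(l : ℤ)) ((K : ℤ) - l - 1) := by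
  have hub := gsel_le hl hlK cc p
  have hnot := gsel_not_mem_later hl hlK cc p K hp
  rw [Qset_final hl hlK cc, Finset.mem_Icc] at hnot
  have hlb : -(l : ℤ) ≤ gsel K l cc p := by
    have hmem := gsel_mem hl hlK cc p
    rw [Finset.mem_insert] at hmem
    rcases hmem with h | h
    · omega
    · have := (Qset_card_sub hl hlK cc p).2 h; rw [Finset.mem_Icc] at this; omega
  rw [Finset.mem_Icc]
  omega

theorem gsel_surj (r : ℤ) (hr : r ∈ Finset.Icc (-(l : ℤ)) ((K : ℤ) - l - 1)) :
    ∃ p < K, gsel K l cc p = r := by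
  have himg : (Finset.range K).image (gsel K l cc) = Finset.Icc (-(l : ℤ)) ((K : ℤ) - l - 1) := by
    apply Finset.eq_of_subset_of_card_le
    · intro x hx
      rw [Finset.mem_image] at hx
      obtain ⟨p, hp, rfl⟩ := hx
      exact gsel_range hl hlK cc p (Finset.mem_range.1 hp)
    · rw [Int.card_Icc, Finset.card_image_of_injOn, Finset.card_range]
      · omega
      · intro a ha b hb hab
        by_contra hne
        rcases Nat.lt_or_ge a b with h | h
        · exact gsel_inj hl hlK cc h hab
        · exact gsel_inj hl hlK cc (by omega) hab.symm
  rw [← himg, Finset.mem_image] at hr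
  obtain ⟨p, hp, hpe⟩ := hr
  exact ⟨p, Finset.mem_range.1 hp, hpe⟩

theorem gsel_recover (cc' : ℕ → ℕ) (h : ∀ p < K, gsel K l cc p = gsel K l cc' p) :
    ∀ p < K - l, cc p % (l + 1) = cc' p % (l + 1) := by
  have hQ : ∀ p ≤ K, Qset K l cc p = Qset K l cc' p := by
    intro p
    induction p with
    | zero => intro _; rfl
    | succ p ih =>
      intro hp
      rw [Qset_succ, Qset_succ, ih (by omega), h p (by omega)]
  intro p hp
  have hpK : p < K := by omega
  have hgp := h p hpK
  unfold gsel at hgp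
  rw [hQ p (by omega)] at hgp
  set L := ((insert ((p : ℕ) : ℤ) (Qset K l cc' p)).sort (· ≤ ·)) with hL
  have hlen : L.length = l + 1 := by
    obtain ⟨hcard, hsub⟩ := Qset_card_sub hl hlK cc' p
    have hpnot : ((p : ℕ) : ℤ) ∉ Qset K l cc' p := by
      intro h'; have := hsub h'; rw [Finset.mem_Icc] at this; omega
    rw [hL, Finset.length_sort, Finset.card_insert_of_notMem hpnot, hcard]
  have hi1 : selIdx K l cc p < L.length := by rw [hlen]; exact selIdx_lt cc p
  have hi2 : selIdx K l cc' p < L.length := by rw [hlen]; exact selIdx_lt cc' p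
  rw [List.getD_eq_getElem _ _ hi1, List.getD_eq_getElem _ _ hi2] at hgp
  have hnd : L.Nodup := Finset.sort_nodup _ _
  have := (List.Nodup.getElem_inj_iff hnd).1 hgp
  unfold selIdx at this
  rw [if_pos hp, if_pos hp] at this
  exact this

end queue

/-! ## Global configuration from block choices -/

noncomputable def Ifun (K l : ℕ) (c : ℤ → ℕ → ℕ) (t : ℤ) : ℤ :=
  (K : ℤ) * (t / K) + gsel K l (c (t / K)) (t % K).toNat

section global

variable {K l : ℕ} (hl : 0 < l) (hlK : l < K) (c : ℤ → ℕ → ℕ)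

theorem emod_lt (hK : 0 < K) (t : ℤ) : (t % K).toNat < K := by
  have h1 : 0 ≤ t % K := Int.emod_nonneg t (by omega)
  have h2 : t % K < K := Int.emod_lt_of_pos t (by exact_mod_cast hK)
  omega

theorem emod_toNat (hK : 0 < K) (t : ℤ) : (((t % K).toNat : ℕ) : ℤ) = t % K := by
  have h1 : 0 ≤ t % K := Int.emod_nonneg t (by omega)
  omega

include hl hlK

theorem Ifun_range (t : ℤ) :
    (K : ℤ) * (t / K) - l ≤ Ifun K l c t ∧ Ifun K l c t ≤ (K : ℤ) * (t / K) + (K - l) - 1 := by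
  have h := gsel_range hl hlK (c (t / K)) (t % K).toNat (emod_lt (by omega) t)
  rw [Finset.mem_Icc] at h
  unfold Ifun
  omega

theorem Ifun_block (t : ℤ) : (Ifun K l c t + l) / K = t / K := by
  obtain ⟨h1, h2⟩ := Ifun_range hl hlK c t
  have hK0 : (0 : ℤ) < K := by omega
  have heq : Ifun K l c t + l = (Ifun K l c t + l - K * (t / K)) + (K : ℤ) * (t / K) := by ring
  rw [heq, Int.add_mul_ediv_left _ _ (ne_of_gt hK0),
    Int.ediv_eq_zero_of_lt (by omega) (by omega), zero_add]

theorem Ifun_disp (t : ℤ) : 0 ≤ t - Ifun K l c t ∧ t - Ifun K l c t ≤ K := by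
  have hle := gsel_le hl hlK (c (t / K)) (t % K).toNat
  have hlb := gsel_lb hl hlK (c (t / K)) (t % K).toNat (emod_lt (by omega) t)
  have hdm := Int.mul_ediv_add_emod t K
  have hm := emod_toNat (K := K) (by omega) t
  unfold Ifun
  omega

theorem Ifun_inj : Function.Injective (Ifun K l c) := by
  intro t1 t2 he
  have hb1 := Ifun_block hl hlK c t1
  have hb2 := Ifun_block hl hlK c t2
  rw [he] at hb1
  have hq : t1 / K = t2 / K := by rw [← hb1, hb2]
  have hg : gsel K l (c (t1 / K)) ((t1 % K).toNat) = gsel K l (c (t1 / K)) ((t2 % K).toNat) := by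
    have h2 : Ifun K l c t1 = Ifun K l c t2 := he
    unfold Ifun at h2
    rw [hq] at h2 ⊢
    omega
  have hp : (t1 % K).toNat = (t2 % K).toNat := by
    by_contra hne
    rcases Nat.lt_or_ge (t1 % K).toNat (t2 % K).toNat with h | h
    · exact gsel_inj hl hlK (c (t1 / K)) h hg
    · exact gsel_inj hl hlK (c (t1 / K)) (by omega) hg.symm
  have hdm1 := Int.mul_ediv_add_emod t1 K
  have hdm2 := Int.mul_ediv_add_emod t2 K
  rw [hq] at hdm1
  have hm1 := emod_toNat (K := K) (by omega) t1
  have hm2 := emod_toNat (K := K) (by omega) t2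
  omega

theorem Ifun_surj : Function.Surjective (Ifun K l c) := by
  intro v
  have hK0 : (0 : ℤ) < K := by omega
  have hdm := Int.mul_ediv_add_emod (v + l) K
  have h1 : 0 ≤ (v + l) % K := Int.emod_nonneg _ (by omega)
  have h2 : (v + l) % K < K := Int.emod_lt_of_pos _ hK0
  have hr : v - (K : ℤ) * ((v + l) / K) ∈ Finset.Icc (-(l : ℤ)) ((K : ℤ) - l - 1) := by
    rw [Finset.mem_Icc]
    omega
  obtain ⟨p, hpK, hpe⟩ := gsel_surj hl hlK (c ((v + (l : ℤ)) / K)) _ hr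
  refine ⟨(K : ℤ) * ((v + l) / K) + p, ?_⟩
  have hdiv : ((K : ℤ) * ((v + l) / K) + (p : ℤ)) / K = (v + (l : ℤ)) / K := by
    rw [add_comm, Int.add_mul_ediv_left _ _ (ne_of_gt hK0),
      Int.ediv_eq_zero_of_lt (by omega) (by exact_mod_cast hpK), zero_add]
  have hmodeq : ((K : ℤ) * ((v + l) / K) + (p : ℤ)) % K = (p : ℤ) := by
    rw [add_comm, Int.add_mul_emod_self_left, Int.emod_eq_of_lt (by omega) (by exact_mod_cast hpK)]
  have hmod : (((K : ℤ) * ((v + l) / K) + (p : ℤ)) % K).toNat = p := by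
    rw [hmodeq]; omega
  unfold Ifun
  rw [hdiv, hmod, hpe]
  ring

end global

noncomputable def omC (K l : ℕ) (c : ℤ → ℕ → ℕ) : ℤ → ℤ :=
  fun n => Function.invFun (Ifun K l c) n - n

section omc

variable {K l : ℕ} (hl : 0 < l) (hlK : l < K) (c : ℤ → ℕ → ℕ)

include hl hlK

theorem Ifun_bij : Function.Bijective (Ifun K l c) :=
  ⟨Ifun_inj hl hlK c, Ifun_surj hl hlK c⟩

theorem omC_pi (n : ℤ) : n + omC K l c n = Function.invFun (Ifun K l c) n := by
  unfold omC; ring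

theorem omC_pi_fun : (fun n => n + omC K l c n) = Function.invFun (Ifun K l c) := by
  funext n; exact omC_pi hl hlK c n

theorem Ifun_invFun (n : ℤ) : Ifun K l c (Function.invFun (Ifun K l c) n) = n :=
  Function.rightInverse_invFun (Ifun_surj hl hlK c) n

theorem invFun_Ifun (t : ℤ) : Function.invFun (Ifun K l c) (Ifun K l c t) = t :=
  Function.leftInverse_invFun (Ifun_inj hl hlK c) t

theorem omC_range (n : ℤ) : omC K l c n ∈ Finset.Icc (0 : ℤ) (K : ℤ) := by
  have h := Ifun_disp hl hlK c (Function.invFun (Ifun K l c) n)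
  rw [Ifun_invFun hl hlK c n] at h
  rw [Finset.mem_Icc]
  unfold omC
  omega

theorem omC_bij : Function.Bijective (fun n => n + omC K l c n) := by
  rw [omC_pi_fun hl hlK c]
  rw [Function.bijective_iff_has_inverse]
  exact ⟨Ifun K l c, Ifun_invFun hl hlK c, invFun_Ifun hl hlK c⟩

theorem omC_aOm : aOm K (omC K l c) = l := by
  unfold aOm
  have hfe : (Finset.Icc (1 : ℤ) (K : ℤ)).filter (fun k => k ≤ omC K l c (-k)) =
      Finset.Icc (1 : ℤ) (l : ℤ) := by
    ext k
    rw [Finset.mem_filter, Finset.mem_Icc, Finset.mem_Icc]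
    constructor
    · rintro ⟨⟨h1, h2⟩, h3⟩
      refine ⟨h1, ?_⟩
      -- the source t of -k is nonneg
      set t := Function.invFun (Ifun K l c) (-k) with ht
      have htnn : 0 ≤ t := by unfold omC at h3; omega
      have hIt : Ifun K l c t = -k := Ifun_invFun hl hlK c (-k)
      have hqnn : 0 ≤ t / (K : ℤ) := Int.ediv_nonneg htnn (by omega)
      have := (Ifun_range hl hlK c t).1
      rw [hIt] at this
      nlinarith [this, hqnn]
    · rintro ⟨h1, h2⟩
      refine ⟨⟨h1, by omega⟩, ?_⟩
      set t := Function.invFun (Ifun K l c) (-k) with ht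
      have hIt : Ifun K l c t = -k := Ifun_invFun hl hlK c (-k)
      have htnn : 0 ≤ t := by
        by_contra hneg
        push_neg at hneg
        have hqneg : t / (K : ℤ) < 0 := Int.ediv_neg_of_neg_of_pos hneg (by omega)
        have h4 := (Ifun_range hl hlK c t).2
        rw [hIt] at h4
        have : (K : ℤ) * (t / K) ≤ -K := by nlinarith
        omega
      unfold omC
      omega
  rw [hfe, Int.card_Icc]
  omega

theorem omC_mem : omC K l c ∈ OmegaKl K l :=
  ⟨⟨omC_range hl hlK c, omC_bij hl hlK c⟩, omC_aOm hl hlK c⟩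

end omc

/-! ## The family of configurations and the lower counting bound -/

def cfun (K l B : ℕ) (d : Fin B → Fin (K - l) → Fin (l + 1)) : ℤ → ℕ → ℕ :=
  fun j p => if h : 1 ≤ j ∧ j ≤ (B : ℤ) ∧ p < K - l then
    (d ⟨(j - 1).toNat, by omega⟩ ⟨p, h.2.2⟩ : ℕ) else 0

theorem card_words_ge (K l B N : ℕ) (hl : 0 < l) (hlK : l < K)
    (hBN : (B + 1) * K ≤ N ∨ B = 0) :
    (l + 1) ^ ((K - l) * B) ≤ Nat.card (WordN (OmegaKl K l) N) := by
  set F : (Fin B → Fin (K - l) → Fin (l + 1)) → WordN (OmegaKl K l) N := fun d =>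
    ⟨fun i => omC K l (cfun K l B d) ((i : ℕ) : ℤ),
      ⟨omC K l (cfun K l B d), omC_mem hl hlK _, fun _ => rfl⟩⟩ with hF
  have hinj : Function.Injective F := by
    intro d1 d2 he
    rcases hBN with hBN | hB0
    swap
    · subst hB0; funext jb; exact jb.elim0
    have hw : ∀ i : Fin N,
        omC K l (cfun K l B d1) ((i : ℕ) : ℤ) = omC K l (cfun K l B d2) ((i : ℕ) : ℤ) :=
      fun i => congrFun (congrArg Subtype.val he) i
    set c1 := cfun K l B d1 with hc1
    set c2 := cfun K l B d2 with hc2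
    have hπ : ∀ n : ℤ, 0 ≤ n → n < (N : ℤ) →
        Function.invFun (Ifun K l c1) n = Function.invFun (Ifun K l c2) n := by
      intro n h0 hN
      have h := hw ⟨n.toNat, by omega⟩
      simp only [Int.toNat_of_nonneg h0] at h
      unfold omC at h
      omega
    have hgsel : ∀ j : ℤ, 1 ≤ j → j ≤ (B : ℤ) → ∀ p : ℕ, p < K →
        gsel K l (c1 j) p = gsel K l (c2 j) p := by
      intro j hj1 hjB p hpK
      have hK0 : (0 : ℤ) < K := by omega
      set t : ℤ := (K : ℤ) * j + p with htdef
      have htdiv : t / (K : ℤ) = j := by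
        rw [htdef, add_comm, Int.add_mul_ediv_left _ _ (ne_of_gt hK0),
          Int.ediv_eq_zero_of_lt (by omega) (by exact_mod_cast hpK), zero_add]
      have htmod : ((t % (K : ℤ)).toNat) = p := by
        have : t % (K : ℤ) = p := by
          rw [htdef, add_comm, Int.add_mul_emod_self_left,
            Int.emod_eq_of_lt (by omega) (by exact_mod_cast hpK)]
        rw [this]; omega
      have hIeq : Ifun K l c1 t = Ifun K l c2 t := by
        have hb1 : (K : ℤ) * 1 ≤ (K : ℤ) * j := by nlinarith
        have hbB : (K : ℤ) * j ≤ (K : ℤ) * B := by nlinarith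
        have hNc : ((B : ℤ) + 1) * K ≤ (N : ℤ) := by exact_mod_cast hBN
        have hr1 := Ifun_range hl hlK c1 t
        have hr2 := Ifun_range hl hlK c2 t
        rw [htdiv] at hr1 hr2
        have h0u : 0 ≤ Ifun K l c1 t ∧ (Ifun K l c1 t) < (N : ℤ) := by
          constructor <;> nlinarith [hr1.1, hr1.2]
        have h0u2 : 0 ≤ Ifun K l c2 t ∧ (Ifun K l c2 t) < (N : ℤ) := by
          constructor <;> nlinarith [hr2.1, hr2.2]
        have e1 : Function.invFun (Ifun K l c1) (Ifun K l c1 t) = t := invFun_Ifun hl hlK c1 t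
        have e2 : Function.invFun (Ifun K l c2) (Ifun K l c2 t) = t := invFun_Ifun hl hlK c2 t
        have e3 : Function.invFun (Ifun K l c1) (Ifun K l c2 t) = t := by
          rw [hπ _ h0u2.1 h0u2.2]; exact e2
        have hinv1 : Function.Injective (Function.invFun (Ifun K l c1)) :=
          Function.LeftInverse.injective (g := Ifun K l c1) (Ifun_invFun hl hlK c1)
        exact hinv1 (e1.trans e3.symm)
      unfold Ifun at hIeq
      rw [htdiv, htmod] at hIeq
      omega
    funext jb pb
    have hj1 : (1 : ℤ) ≤ ((jb : ℕ) : ℤ) + 1 := by omega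
    have hjB : ((jb : ℕ) : ℤ) + 1 ≤ (B : ℤ) := by have := jb.isLt; omega
    have hrec := gsel_recover hl hlK (c1 (((jb : ℕ) : ℤ) + 1)) (c2 (((jb : ℕ) : ℤ) + 1))
      (fun p hp => hgsel (((jb : ℕ) : ℤ) + 1) hj1 hjB p hp) (pb : ℕ) pb.isLt
    have hcond : (1 : ℤ) ≤ ((jb : ℕ) : ℤ) + 1 ∧ ((jb : ℕ) : ℤ) + 1 ≤ (B : ℤ) ∧ (pb : ℕ) < K - l :=
      ⟨hj1, hjB, pb.isLt⟩
    rw [hc1, hc2] at hrec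
    unfold cfun at hrec
    rw [dif_pos hcond, dif_pos hcond] at hrec
    rw [Nat.mod_eq_of_lt (Fin.is_lt _), Nat.mod_eq_of_lt (Fin.is_lt _)] at hrec
    have hidx : ((((jb : ℕ) : ℤ) + 1) - 1).toNat = (jb : ℕ) := by omega
    have hfj : (⟨((((jb : ℕ) : ℤ) + 1) - 1).toNat, by omega⟩ : Fin B) = jb := Fin.ext hidx
    rw [hfj] at hrec
    simp only [Fin.eta] at hrec
    exact Fin.val_injective hrec
  calc (l + 1) ^ ((K - l) * B) = Nat.card (Fin B → Fin (K - l) → Fin (l + 1)) := by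
        rw [Nat.card_eq_fintype_card, Fintype.card_fun, Fintype.card_fun,
          Fintype.card_fin, Fintype.card_fin, Fintype.card_fin, ← pow_mul]
    _ ≤ Nat.card (WordN (OmegaKl K l) N) := Nat.card_le_card_of_injective F hinj

/-! ## Analysis -/

noncomputable def fseq (K l : ℕ) (N : ℕ) : ℝ :=
  Real.log (Nat.card (WordN (OmegaKl K l) N)) / N

theorem ent1_eq (K l : ℕ) : ent1 (OmegaKl K l) = Filter.limsup (fseq K l) Filter.atTop := rfl

section analysis

variable {K l : ℕ} (hl : 0 < l) (hlK : l < K)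

include hl hlK

theorem card_words_pos (N : ℕ) : 1 ≤ Nat.card (WordN (OmegaKl K l) N) := by
  simpa using card_words_ge K l 0 N hl hlK (Or.inr rfl)

theorem fseq_nonneg (N : ℕ) : 0 ≤ fseq K l N := by
  apply div_nonneg _ (Nat.cast_nonneg N)
  apply Real.log_nonneg
  exact_mod_cast card_words_pos hl hlK N

omit hl hlK in
theorem card_words_triv (N : ℕ) : Nat.card (WordN (OmegaKl K l) N) ≤ (K + 1) ^ N := by
  have hinj : Function.Injective
      (fun w : WordN (OmegaKl K l) N => fun i : Fin N =>
        (⟨w.1 i, by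
          obtain ⟨ω, hω, hωw⟩ := w.2
          rw [hωw i]; exact hω.1.1 _⟩ : Finset.Icc (0:ℤ) (K:ℤ))) := by
    intro w1 w2 h
    apply Subtype.ext
    funext i
    exact congrArg Subtype.val (congrFun h i)
  have h := Nat.card_le_card_of_injective _ hinj
  have hIcc : Fintype.card (Finset.Icc (0:ℤ) (K:ℤ)) = K + 1 := by
    rw [Fintype.card_coe, Int.card_Icc]; omega
  rwa [Nat.card_eq_fintype_card (α := Fin N → Finset.Icc (0:ℤ) (K:ℤ)), Fintype.card_fun, hIcc,
    Fintype.card_fin] at h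

theorem fseq_le_const (N : ℕ) : fseq K l N ≤ Real.log (K + 1) := by
  have hlogK : 0 ≤ Real.log (K + 1) := Real.log_nonneg (by exact_mod_cast Nat.le_add_left 1 _)
  rcases Nat.eq_zero_or_pos N with rfl | hN
  · simp [fseq, hlogK]
  have hNpos : (0 : ℝ) < N := by exact_mod_cast hN
  rw [fseq, div_le_iff₀ hNpos]
  calc Real.log (Nat.card (WordN (OmegaKl K l) N))
      ≤ Real.log (((K + 1) ^ N : ℕ) : ℝ) := by
        apply Real.log_le_log
        · exact_mod_cast card_words_pos hl hlK N
        · exact_mod_cast card_words_triv N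
    _ = N * Real.log (K + 1) := by push_cast; rw [Real.log_pow]
    _ = Real.log (K + 1) * N := by ring

theorem fseq_upper (N : ℕ) (hN : 2 * K ≤ N) (hN1 : 1 ≤ N) :
    fseq K l N ≤ 2 * K * Real.log (K + 1) / N + Real.log (l + 1) := by
  have hK : 0 < K := by omega
  have hcard := card_words_le K l N hK hN
  have hNpos : (0 : ℝ) < N := by exact_mod_cast hN1
  have hlogl : 0 ≤ Real.log (l + 1) := Real.log_nonneg (by exact_mod_cast Nat.le_add_left 1 _)
  have hlog : Real.log (Nat.card (WordN (OmegaKl K l) N)) ≤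
      2 * K * Real.log (K + 1) + N * Real.log (l + 1) := by
    have h1 : (0 : ℝ) < (Nat.card (WordN (OmegaKl K l) N) : ℝ) := by
      exact_mod_cast card_words_pos hl hlK N
    have hNK : ((N - K : ℕ) : ℝ) ≤ (N : ℝ) := by exact_mod_cast Nat.sub_le N K
    calc Real.log (Nat.card (WordN (OmegaKl K l) N))
        ≤ Real.log ((((K+1)^K * ((l+1)^(N-K) * (K+1)^K) : ℕ)) : ℝ) := by
          apply Real.log_le_log h1
          exact_mod_cast hcard
      _ = K * Real.log (K + 1) + ((N - K : ℕ) * Real.log (l + 1) + K * Real.log (K + 1)) := by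
          push_cast
          rw [Real.log_mul (by positivity) (by positivity),
            Real.log_mul (by positivity) (by positivity)]
          simp only [Real.log_pow]
      _ ≤ 2 * K * Real.log (K + 1) + N * Real.log (l + 1) := by nlinarith
  rw [fseq, div_le_iff₀ hNpos]
  have hexp : (2 * K * Real.log (K + 1) / N + Real.log (l + 1)) * N =
      2 * K * Real.log (K + 1) + N * Real.log (l + 1) := by
    field_simp
  rw [hexp]
  exact hlog

theorem fseq_lower (N : ℕ) :
    (((K - l) * (N / K - 2) : ℕ) : ℝ) * Real.log (l + 1) / N ≤ fseq K l N := by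
  rcases Nat.eq_zero_or_pos N with rfl | hN
  · simp [fseq]
  have hNpos : (0 : ℝ) < N := by exact_mod_cast hN
  have hB : ((N / K - 2) + 1) * K ≤ N ∨ (N / K - 2) = 0 := by
    rcases Nat.lt_or_ge (N / K) 3 with h | h
    · right; omega
    · left
      have h1 := Nat.div_mul_le_self N K
      calc (N / K - 2 + 1) * K ≤ (N / K) * K := Nat.mul_le_mul_right K (by omega)
        _ ≤ N := h1
  have hcard := card_words_ge K l (N / K - 2) N hl hlK hB
  rw [fseq]
  rw [div_le_div_iff₀ hNpos hNpos]
  apply mul_le_mul_of_nonneg_right _ (le_of_lt hNpos)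
  calc (((K - l) * (N / K - 2) : ℕ) : ℝ) * Real.log (l + 1)
      = Real.log ((((l + 1) ^ ((K - l) * (N / K - 2)) : ℕ)) : ℝ) := by
        push_cast
        rw [Real.log_pow]
        push_cast
        ring
    _ ≤ Real.log (Nat.card (WordN (OmegaKl K l) N)) := by
        apply Real.log_le_log (by positivity)
        exact_mod_cast hcard

theorem lower_tendsto :
    Filter.Tendsto (fun N : ℕ => (((K - l) * (N / K - 2) : ℕ) : ℝ) * Real.log (l + 1) / N)
      Filter.atTop (nhds ((1 - (l : ℝ) / K) * Real.log (l + 1))) := by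
  have hK0 : (0 : ℝ) < K := by exact_mod_cast (by omega : 0 < K)
  -- inner convergence
  have hinner : Filter.Tendsto (fun N : ℕ => ((N / K - 2 : ℕ) : ℝ) / N) Filter.atTop
      (nhds (1 / K)) := by
    apply tendsto_of_tendsto_of_tendsto_of_le_of_le'
      (g := fun N : ℕ => 1 / (K : ℝ) - 3 / N) (h := fun _ : ℕ => 1 / (K : ℝ))
    · have h3 : Filter.Tendsto (fun N : ℕ => (3 : ℝ) / N) Filter.atTop (nhds 0) :=
        tendsto_const_div_atTop_nhds_zero_nat 3
      have := (tendsto_const_nhds (x := 1 / (K : ℝ)) (f := Filter.atTop (α := ℕ))).sub h3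
      simpa using this
    · exact tendsto_const_nhds
    · filter_upwards [Filter.eventually_ge_atTop 1] with N hN1
      have hNpos : (0 : ℝ) < N := by exact_mod_cast hN1
      rw [le_div_iff₀ hNpos]
      have hfloor : (N : ℝ) / K - 1 ≤ ((N / K : ℕ) : ℝ) := by
        have hz : (N : ℤ) < (K : ℤ) * ((N / K : ℕ) : ℤ) + K := by
          have h1 := Nat.div_add_mod N K
          have h2 := Nat.mod_lt N (show 0 < K by omega)
          omega
        have hzr : (N : ℝ) < (K : ℝ) * ((N / K : ℕ) : ℝ) + K := by exact_mod_cast hz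
        rw [div_sub_one (ne_of_gt hK0), div_le_iff₀ hK0]
        nlinarith
      have hsub : ((N / K : ℕ) : ℝ) - 2 ≤ ((N / K - 2 : ℕ) : ℝ) := by
        rcases le_total 2 (N / K) with h | h
        · rw [Nat.cast_sub h]
          norm_num
        · have h0 : N / K - 2 = 0 := by omega
          rw [h0]
          have h2 : ((N / K : ℕ) : ℝ) ≤ 2 := by exact_mod_cast h
          simp
          linarith
      have hexp : (1 / (K : ℝ) - 3 / N) * N = (N : ℝ) / K - 3 := by
        field_simp
      rw [hexp]
      linarith
    · filter_upwards [Filter.eventually_ge_atTop 1] with N hN1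
      have hNpos : (0 : ℝ) < N := by exact_mod_cast hN1
      rw [div_le_iff₀ hNpos]
      have hfloor : ((N / K : ℕ) : ℝ) ≤ (N : ℝ) / K := Nat.cast_div_le
      have hsub : ((N / K - 2 : ℕ) : ℝ) ≤ ((N / K : ℕ) : ℝ) := by
        exact_mod_cast Nat.sub_le _ _
      have hexp : 1 / (K : ℝ) * N = (N : ℝ) / K := by field_simp
      rw [hexp]
      linarith
  have hmul := (hinner.const_mul (((K - l : ℕ) : ℝ))).mul_const (Real.log (l + 1))
  have htarget : ((K - l : ℕ) : ℝ) * (1 / K) * Real.log (l + 1) =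
      (1 - (l : ℝ) / K) * Real.log (l + 1) := by
    rw [Nat.cast_sub (le_of_lt hlK)]
    field_simp
  rw [htarget] at hmul
  apply hmul.congr
  intro N
  push_cast
  ring

theorem ent_upper : ent1 (OmegaKl K l) ≤ Real.log (l + 1) := by
  rw [ent1_eq]
  set u : ℕ → ℝ := fun N => 2 * K * Real.log (K + 1) / N + Real.log (l + 1) with hu
  have hut : Filter.Tendsto u Filter.atTop (nhds (Real.log (l + 1))) := by
    have h3 : Filter.Tendsto (fun N : ℕ => 2 * K * Real.log (K + 1) / N) Filter.atTop (nhds 0) :=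
      tendsto_const_div_atTop_nhds_zero_nat _
    have := h3.add_const (Real.log (l + 1))
    simpa using this
  have hle : fseq K l ≤ᶠ[Filter.atTop] u := by
    filter_upwards [Filter.eventually_ge_atTop (max (2 * K) 1)] with N hN
    exact fseq_upper hl hlK N (le_trans (le_max_left _ _) hN) (le_trans (le_max_right _ _) hN)
  have hbd0 : Filter.IsBoundedUnder (· ≥ ·) Filter.atTop (fseq K l) :=
    Filter.isBoundedUnder_of ⟨0, fun N => fseq_nonneg hl hlK N⟩
  have hco : Filter.IsCoboundedUnder (· ≤ ·) Filter.atTop (fseq K l) :=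
    hbd0.isCoboundedUnder_le
  have hbd : Filter.IsBoundedUnder (· ≤ ·) Filter.atTop u := hut.isBoundedUnder_le
  calc Filter.limsup (fseq K l) Filter.atTop ≤ Filter.limsup u Filter.atTop :=
        Filter.limsup_le_limsup hle hco hbd
    _ = Real.log (l + 1) := hut.limsup_eq

theorem ent_lower : (1 - (l : ℝ) / K) * Real.log (l + 1) ≤ ent1 (OmegaKl K l) := by
  rw [ent1_eq]
  have hgt := lower_tendsto hl hlK
  calc (1 - (l : ℝ) / K) * Real.log (l + 1)
      = Filter.limsup (fun N : ℕ => (((K - l) * (N / K - 2) : ℕ) : ℝ) * Real.log (l + 1) / N)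
          Filter.atTop := (hgt.limsup_eq).symm
    _ ≤ Filter.limsup (fseq K l) Filter.atTop :=
        Filter.limsup_le_limsup (Filter.Eventually.of_forall (fseq_lower hl hlK))
          hgt.isBoundedUnder_ge.isCoboundedUnder_le
          (Filter.isBoundedUnder_of ⟨Real.log (K + 1), fun N => fseq_le_const hl hlK N⟩)

end analysis


/-- `(1 - l/K)·log(l+1) ≤ h(Ω_{K,l}) ≤ log(l+1)`, hence
`h(Ω_{K,l}) → log(l+1)` as `K → ∞`. -/
theorem entropy_bounds :
    (∀ K l : ℕ, 0 < l → l < K →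
      (1 - (l : ℝ) / K) * Real.log (l + 1) ≤ ent1 (OmegaKl K l) ∧
        ent1 (OmegaKl K l) ≤ Real.log (l + 1)) ∧
    (∀ l : ℕ, 1 ≤ l →
      Filter.Tendsto (fun K : ℕ => ent1 (OmegaKl K l)) Filter.atTop
        (nhds (Real.log (l + 1)))) := by
  constructor
  · intro K l hl hlK
    exact ⟨ent_lower hl hlK, ent_upper hl hlK⟩
  · intro l hl
    apply tendsto_of_tendsto_of_tendsto_of_le_of_le'
      (g := fun K : ℕ => (1 - (l : ℝ) / K) * Real.log (l + 1))
      (h := fun _ : ℕ => Real.log (l + 1))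
    · have h1 : Filter.Tendsto (fun K : ℕ => (l : ℝ) / K) Filter.atTop (nhds 0) :=
        tendsto_const_div_atTop_nhds_zero_nat (l : ℝ)
      have h2 := ((tendsto_const_nhds (x := (1 : ℝ))
        (f := Filter.atTop (α := ℕ))).sub h1).mul_const (Real.log (l + 1))
      simpa using h2
    · exact tendsto_const_nhds
    · filter_upwards [Filter.eventually_ge_atTop (l + 1)] with K hK
      exact ent_lower hl (by omega)
    · filter_upwards [Filter.eventually_ge_atTop (l + 1)] with K hK
      exact ent_upper hl (by omega)
end

section
/- For K ≥ 2 and 1 ≤ l ≤ K/2, the topological entropy satisfies h(Ω_{K,l−1}) ≤ h(Ω_{K,l}). -/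
namespace EntM

variable (K : ℕ)

/-- the permutation associated to `ω`. -/
def pp (ω : ℤ → ℤ) (n : ℤ) : ℤ := n + ω n

/-- state at cut `m`. -/
noncomputable def St (ω : ℤ → ℤ) (m : ℤ) : Finset ℤ :=
  ((Finset.Ico (m - K) m).filter (fun n => m ≤ pp ω n)).image (fun n => pp ω n - m)

variable {K}

lemma pp_inj {ω : ℤ → ℤ} (hω : ω ∈ OmegaK K) : Function.Injective (pp ω) := hω.2.injective

lemma pp_surj {ω : ℤ → ℤ} (hω : ω ∈ OmegaK K) : Function.Surjective (pp ω) := hω.2.surjective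

lemma le_pp {ω : ℤ → ℤ} (hb : ∀ n, ω n ∈ Finset.Icc (0 : ℤ) (K : ℤ)) (n : ℤ) :
    n ≤ pp ω n ∧ pp ω n ≤ n + K := by
  have := hb n; rw [Finset.mem_Icc] at this
  constructor <;> [skip; skip] <;> simp [pp] <;> omega

lemma mem_St {ω : ℤ → ℤ} (hb : ∀ n, ω n ∈ Finset.Icc (0 : ℤ) (K : ℤ)) {m v : ℤ} :
    v ∈ St K ω m ↔ 0 ≤ v ∧ ∃ n, n < m ∧ pp ω n = m + v := by
  constructor
  · intro h
    simp only [St, Finset.mem_image, Finset.mem_filter, Finset.mem_Ico] at h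
    obtain ⟨n, ⟨⟨h1, h2⟩, h3⟩, rfl⟩ := h
    exact ⟨by omega, n, h2, by ring⟩
  · rintro ⟨hv, n, hn, he⟩
    have hub := (le_pp hb n).2
    simp only [St, Finset.mem_image, Finset.mem_filter, Finset.mem_Ico]
    exact ⟨n, ⟨⟨by omega, hn⟩, by omega⟩, by omega⟩

lemma St_subset {ω : ℤ → ℤ} (hb : ∀ n, ω n ∈ Finset.Icc (0 : ℤ) (K : ℤ)) (m : ℤ) :
    St K ω m ⊆ Finset.Icc (0 : ℤ) ((K : ℤ) - 1) := by
  intro v hv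
  rw [mem_St hb] at hv
  obtain ⟨hv0, n, hn, he⟩ := hv
  have hub := (le_pp hb n).2
  rw [Finset.mem_Icc]
  omega

lemma zero_mem_St_iff {ω : ℤ → ℤ} (hω : ω ∈ OmegaK K) (m : ℤ) :
    (0 : ℤ) ∈ St K ω m ↔ ω m ≠ 0 := by
  rw [mem_St hω.1]
  constructor
  · rintro ⟨-, n, hn, he⟩ h0
    have : pp ω m = m := by simp [pp, h0]
    have := pp_inj hω (a₁ := n) (a₂ := m) (by omega)
    omega
  · intro h0
    obtain ⟨n, hn⟩ := pp_surj hω m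
    have hl := (le_pp hω.1 n).1
    have hm : pp ω m ≠ m := by
      have := (hω.1 m); rw [Finset.mem_Icc] at this; simp [pp]; omega
    refine ⟨le_refl 0, n, ?_, by omega⟩
    rcases lt_or_eq_of_le (hl.trans (le_of_eq hn)) with h | h
    · omega
    · exact absurd (h ▸ hn) hm

lemma omega_not_mem_St {ω : ℤ → ℤ} (hω : ω ∈ OmegaK K) (m : ℤ) : ω m ∉ St K ω m := by
  intro h
  rw [mem_St hω.1] at h
  obtain ⟨hv0, n, hn, he⟩ := h
  have : pp ω n = pp ω m := by simp [pp] at he ⊢; omega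
  have := pp_inj hω this
  omega

lemma St_step {ω : ℤ → ℤ} (hb : ∀ n, ω n ∈ Finset.Icc (0 : ℤ) (K : ℤ)) (m : ℤ) :
    St K ω (m + 1) = ((St K ω m ∪ {ω m}).erase 0).image (fun v => v - 1) := by
  ext v
  have hbm := hb m; rw [Finset.mem_Icc] at hbm
  simp only [Finset.mem_image, Finset.mem_erase, Finset.mem_union, Finset.mem_singleton]
  constructor
  · intro h
    rw [mem_St hb] at h
    obtain ⟨hv0, n, hn, he⟩ := h
    refine ⟨v + 1, ⟨by omega, ?_⟩, by ring⟩
    rcases lt_or_eq_of_le (show n ≤ m by omega) with h | h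
    · left; rw [mem_St hb]; exact ⟨by omega, n, h, by omega⟩
    · right; subst h; simp [pp] at he; omega
  · rintro ⟨u, ⟨hu0, hu⟩, rfl⟩
    rw [mem_St hb]
    rcases hu with h | h
    · rw [mem_St hb] at h
      obtain ⟨hv0, n, hn, he⟩ := h
      exact ⟨by omega, n, by omega, by omega⟩
    · exact ⟨by omega, m, by omega, by simp [pp]; omega⟩

lemma card_St_step {ω : ℤ → ℤ} (hω : ω ∈ OmegaK K) (m : ℤ) :
    (St K ω (m + 1)).card = (St K ω m).card := by
  rw [St_step hω.1]
  rw [Finset.card_image_of_injective _ (fun a b h => by omega)]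
  by_cases h0 : ω m = 0
  · have : (0:ℤ) ∉ St K ω m := by rw [zero_mem_St_iff hω]; simp [h0]
    rw [h0]
    rw [Finset.union_comm, ← Finset.insert_eq, Finset.erase_insert this]
  · have h0m : (0:ℤ) ∈ St K ω m := (zero_mem_St_iff hω m).2 h0
    have hnm : ω m ∉ St K ω m := omega_not_mem_St hω m
    rw [Finset.card_erase_of_mem (by simp [h0m]),
        Finset.union_comm, ← Finset.insert_eq, Finset.card_insert_of_notMem hnm]
    have : 0 < (St K ω m).card := Finset.card_pos.2 ⟨0, h0m⟩
    omega

lemma card_St_zero {ω : ℤ → ℤ} (hω : ω ∈ OmegaK K) : (St K ω 0).card = aOm K ω := by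
  rw [aOm]
  refine (Finset.card_bij (fun k _ => ω (-k) - k) ?_ ?_ ?_).symm
  · intro k hk
    simp only [Finset.mem_filter, Finset.mem_Icc] at hk
    rw [mem_St hω.1]
    exact ⟨by omega, -k, by omega, by simp [pp]; ring⟩
  · intro k hk k' hk' he
    simp only [Finset.mem_filter, Finset.mem_Icc] at hk hk'
    have : pp ω (-k) = pp ω (-k') := by simp [pp]; omega
    have := pp_inj hω this
    omega
  · intro v hv
    rw [mem_St hω.1] at hv
    obtain ⟨hv0, n, hn, he⟩ := hv
    have hub := (le_pp hω.1 n).2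
    simp only [pp] at he hub
    refine ⟨-n, ?_, ?_⟩
    · simp only [Finset.mem_filter, Finset.mem_Icc, neg_neg]
      omega
    · simp only [neg_neg]
      omega


lemma card_St_nat {ω : ℤ → ℤ} (hω : ω ∈ OmegaK K) (m : ℕ) :
    (St K ω m).card = aOm K ω := by
  induction m with
  | zero => exact_mod_cast card_St_zero hω
  | succ n ih =>
    have := card_St_step hω (n : ℤ)
    rw [show ((n + 1 : ℕ) : ℤ) = (n : ℤ) + 1 by push_cast; ring]
    omega

lemma St_congr {ω₁ ω₂ : ℤ → ℤ} (m : ℤ) (h : ∀ n, m - K ≤ n → n < m → ω₁ n = ω₂ n) :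
    St K ω₁ m = St K ω₂ m := by
  have key : ∀ n, m - K ≤ n → n < m → pp ω₁ n = pp ω₂ n := by
    intro n h1 h2; simp only [pp, h n h1 h2]
  ext v
  simp only [St, Finset.mem_image, Finset.mem_filter, Finset.mem_Ico]
  constructor
  · rintro ⟨n, ⟨⟨h1, h2⟩, h3⟩, h4⟩
    exact ⟨n, ⟨⟨h1, h2⟩, (key n h1 h2) ▸ h3⟩, (key n h1 h2) ▸ h4⟩
  · rintro ⟨n, ⟨⟨h1, h2⟩, h3⟩, h4⟩
    exact ⟨n, ⟨⟨h1, h2⟩, (key n h1 h2).symm ▸ h3⟩, (key n h1 h2).symm ▸ h4⟩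

/-- Hall-type bound for the state at cut 0. -/
lemma hall_St_zero {ω : ℤ → ℤ} (hω : ω ∈ OmegaK K) {v : ℤ} (hv0 : 0 ≤ v) (hvK : v ≤ K) :
    (((St K ω 0).filter (fun x => v ≤ x)).card : ℤ) ≤ (K : ℤ) - v := by
  have hsub : (St K ω 0).filter (fun x => v ≤ x) ⊆
      (Finset.Ico (v - K) 0).image (pp ω) := by
    intro x hx
    rw [Finset.mem_filter, mem_St hω.1] at hx
    obtain ⟨⟨hx0, n, hn, he⟩, hvx⟩ := hx
    have hub := (le_pp hω.1 n).2
    rw [Finset.mem_image]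
    exact ⟨n, by rw [Finset.mem_Ico]; omega, by omega⟩
  calc (((St K ω 0).filter (fun x => v ≤ x)).card : ℤ)
      ≤ (((Finset.Ico (v - K) 0).image (pp ω)).card : ℤ) := by
        exact_mod_cast Finset.card_le_card hsub
    _ ≤ ((Finset.Ico (v - K) (0:ℤ)).card : ℤ) := by exact_mod_cast Finset.card_image_le
    _ ≤ (K : ℤ) - v := by rw [Int.card_Ico]; simp [Int.toNat_of_nonneg]; omega


/-- `i`-th smallest element (0-based) of a finset of integers. -/
def nth (A : Finset ℤ) (i : ℕ) : ℤ := (A.sort (· ≤ ·)).getD i 0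

/-- index (rank from below) of `x` in `A`. -/
def idx (A : Finset ℤ) (x : ℤ) : ℕ := (A.sort (· ≤ ·)).idxOf x

lemma sort_len (A : Finset ℤ) : (A.sort (· ≤ ·)).length = A.card := Finset.length_sort _

lemma nth_mem {A : Finset ℤ} {i : ℕ} (h : i < A.card) : nth A i ∈ A := by
  rw [nth, List.getD_eq_getElem _ _ (by rw [sort_len]; exact h)]
  exact (Finset.mem_sort _).1 (List.getElem_mem _)

lemma idx_lt {A : Finset ℤ} {x : ℤ} (hx : x ∈ A) : idx A x < A.card := by
  rw [idx, ← sort_len]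
  exact List.idxOf_lt_length_iff.2 ((Finset.mem_sort _).2 hx)

lemma nth_idx {A : Finset ℤ} {x : ℤ} (hx : x ∈ A) : nth A (idx A x) = x := by
  rw [nth, List.getD_eq_getElem _ _ (by rw [sort_len]; exact idx_lt hx)]
  exact List.getElem_idxOf _

lemma idx_nth {A : Finset ℤ} {i : ℕ} (h : i < A.card) : idx A (nth A i) = i := by
  rw [nth, idx, List.getD_eq_getElem _ _ (by rw [sort_len]; exact h)]
  exact List.Nodup.idxOf_getElem (Finset.sort_nodup _ _) _ _

lemma nth_inj {A : Finset ℤ} {i j : ℕ} (hi : i < A.card) (hj : j < A.card)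
    (h : nth A i = nth A j) : i = j := by
  rw [← idx_nth hi, ← idx_nth hj, h]

lemma nth_mono {A : Finset ℤ} {i j : ℕ} (hij : i ≤ j) (hj : j < A.card) :
    nth A i ≤ nth A j := by
  rw [nth, nth, List.getD_eq_getElem _ _ (by rw [sort_len]; omega),
    List.getD_eq_getElem _ _ (by rw [sort_len]; exact hj)]
  rcases eq_or_lt_of_le hij with rfl | hlt
  · exact le_refl _
  · exact le_of_lt (Finset.sortedLT_sort A |>.strictMono_get
      (by exact hlt : (⟨i, by rw [sort_len]; omega⟩ : Fin _) < ⟨j, by rw [sort_len]; exact hj⟩))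

/-- number of elements `≥ nth A i` is at least `card - i`. -/
lemma hall_nth {A : Finset ℤ} {i : ℕ} (h : i < A.card) :
    A.card - i ≤ ((A.filter (fun x => nth A i ≤ x)).card : ℕ) := by
  have : (Finset.Ico i A.card).card ≤ (A.filter (fun x => nth A i ≤ x)).card := by
    apply Finset.card_le_card_of_injOn (fun j => nth A j)
    · intro j hj
      rw [Finset.mem_coe, Finset.mem_Ico] at hj
      rw [Finset.mem_coe, Finset.mem_filter]
      exact ⟨nth_mem hj.2, nth_mono hj.1 hj.2⟩
    · intro a ha b hb hab
      rw [Finset.mem_coe, Finset.mem_Ico] at ha hb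
      exact nth_inj ha.2 hb.2 hab
  rw [Nat.card_Ico] at this
  omega


/-! ### The ghost construction -/

/-- ghost trajectory -/
noncomputable def gg (K l : ℕ) (ω : ℤ → ℤ) : ℕ → ℤ
  | 0 => nth ((Finset.Icc 0 ((K : ℤ) - l)) \ St K ω 0) 0
  | (m+1) =>
    let x := gg K l ω m
    let T := insert x (St K ω (m : ℤ))
    if ω m = x then nth (Finset.Icc 1 (K : ℤ) \ T) (idx T x) - 1 else x - 1

/-- combined state -/
noncomputable def TT (K l : ℕ) (ω : ℤ → ℤ) (m : ℕ) : Finset ℤ := insert (gg K l ω m) (St K ω (m : ℤ))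

/-- complement -/
noncomputable def CC (K l : ℕ) (ω : ℤ → ℤ) (m : ℕ) : Finset ℤ := Finset.Icc 1 (K : ℤ) \ TT K l ω m

/-- the new word -/
noncomputable def wq (K l : ℕ) (ω : ℤ → ℤ) (m : ℕ) : ℤ :=
  if ω m = gg K l ω m then nth (CC K l ω m) (idx (TT K l ω m) (gg K l ω m)) else ω m

section Ghost

variable {K l : ℕ} {ω : ℤ → ℤ}

lemma gg_succ (m : ℕ) : gg K l ω (m+1) =
    (if ω m = gg K l ω m then nth (CC K l ω m) (idx (TT K l ω m) (gg K l ω m)) else gg K l ω m)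
      - 1 := by
  by_cases h : ω m = gg K l ω m <;> simp [gg, TT, CC, h]

lemma gg_succ_eq_wq (m : ℕ) (h : ω m = gg K l ω m) : gg K l ω (m+1) = wq K l ω m - 1 := by
  rw [gg_succ, wq, if_pos h, if_pos h]

lemma gg_succ_eq_slide (m : ℕ) (h : ω m ≠ gg K l ω m) : gg K l ω (m+1) = gg K l ω m - 1 := by
  rw [gg_succ, if_neg h]

variable (hK : 2 ≤ K) (hl : 1 ≤ l) (hlK : 2 * l ≤ K)
  (hω : ω ∈ OmegaK K) (ha : aOm K ω = l - 1)

include hω hl ha in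
lemma card_TT (m : ℕ) (hg : gg K l ω m ∉ St K ω (m : ℤ)) : (TT K l ω m).card = l := by
  rw [TT, Finset.card_insert_of_notMem hg, card_St_nat hω, ha]
  omega

include hω hl hlK ha in
lemma card_CC (m : ℕ) (hg : gg K l ω m ∉ St K ω (m : ℤ)) : l ≤ (CC K l ω m).card := by
  have h1 : (Finset.Icc (1:ℤ) (K:ℤ)).card = K := by
    rw [Int.card_Icc]; omega
  have h2 := Finset.le_card_sdiff (TT K l ω m) (Finset.Icc (1:ℤ) (K:ℤ))
  rw [CC]
  rw [card_TT hl hω ha m hg] at h2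
  omega

include hω hl hlK ha in
lemma nth_CC_mem (m : ℕ) (hg : gg K l ω m ∉ St K ω (m : ℤ)) :
    nth (CC K l ω m) (idx (TT K l ω m) (gg K l ω m)) ∈ CC K l ω m := by
  apply nth_mem
  have h1 : idx (TT K l ω m) (gg K l ω m) < (TT K l ω m).card :=
    idx_lt (by rw [TT]; exact Finset.mem_insert_self _ _)
  rw [card_TT hl hω ha m hg] at h1
  have := card_CC hl hlK hω ha m hg
  omega

include hω hl hlK ha in
lemma gg_inv : ∀ m : ℕ, gg K l ω m ∉ St K ω (m : ℤ) ∧ 0 ≤ gg K l ω m ∧ gg K l ω m ≤ (K:ℤ) - 1 := by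
  intro m
  induction m with
  | zero =>
    have hcard : 0 < ((Finset.Icc 0 ((K : ℤ) - l)) \ St K ω 0).card := by
      have h1 : (Finset.Icc (0:ℤ) ((K:ℤ) - l)).card = K - l + 1 := by
        rw [Int.card_Icc]; omega
      have h2 := Finset.le_card_sdiff (St K ω 0) (Finset.Icc (0:ℤ) ((K:ℤ) - l))
      have h3 : (St K ω 0).card = l - 1 := by
        have := card_St_zero hω; omega
      omega
    have hmem := nth_mem hcard
    rw [Finset.mem_sdiff, Finset.mem_Icc] at hmem
    exact ⟨by simpa [gg] using hmem.2, by simpa [gg] using hmem.1.1,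
      by have := hmem.1.2; simp only [gg]; omega⟩
  | succ m ih =>
    have hcast : ((m + 1 : ℕ) : ℤ) = (m : ℤ) + 1 := by push_cast; ring
    have hst : St K ω ((m+1 : ℕ) : ℤ)
        = ((St K ω (m:ℤ) ∪ {ω (m:ℤ)}).erase 0).image (fun v => v - 1) := by
      rw [hcast, St_step hω.1]
    by_cases hc : ω (m : ℤ) = gg K l ω m
    · set e := nth (CC K l ω m) (idx (TT K l ω m) (gg K l ω m)) with hedef
      have he : e ∈ CC K l ω m := nth_CC_mem hl hlK hω ha m ih.1
      rw [CC, Finset.mem_sdiff, Finset.mem_Icc] at he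
      have hgs : gg K l ω (m+1) = e - 1 := by
        rw [gg_succ, if_pos hc]
      refine ⟨?_, by omega, by omega⟩
      rw [hst, hgs]
      intro hmem
      rw [Finset.mem_image] at hmem
      obtain ⟨u, hu, huv⟩ := hmem
      have hue : u = e := by omega
      subst hue
      rw [Finset.mem_erase, Finset.mem_union, Finset.mem_singleton] at hu
      apply he.2
      rw [TT]
      rcases hu.2 with h | h
      · exact Finset.mem_insert_of_mem h
      · rw [h, hc]; exact Finset.mem_insert_self _ _
    · have hgs : gg K l ω (m+1) = gg K l ω m - 1 := gg_succ_eq_slide m hc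
      have hx1 : 1 ≤ gg K l ω m := by
        rcases eq_or_lt_of_le ih.2.1 with h | h
        · exfalso
          have h0 : (0:ℤ) ∉ St K ω (m:ℤ) := h ▸ ih.1
          rw [zero_mem_St_iff hω] at h0
          push_neg at h0
          exact hc (by omega)
        · omega
      refine ⟨?_, by omega, by omega⟩
      rw [hst, hgs]
      intro hmem
      rw [Finset.mem_image] at hmem
      obtain ⟨u, hu, huv⟩ := hmem
      have hue : u = gg K l ω m := by omega
      subst hue
      rw [Finset.mem_erase, Finset.mem_union, Finset.mem_singleton] at hu
      rcases hu.2 with h | h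
      · exact ih.1 h
      · exact hc h.symm


include hω hl hlK ha in
lemma slide_pos (m : ℕ) (hc : ω (m:ℤ) ≠ gg K l ω m) : 1 ≤ gg K l ω m := by
  have ih := gg_inv hl hlK hω ha m
  rcases eq_or_lt_of_le ih.2.1 with h | h
  · exfalso
    have h0 : (0:ℤ) ∉ St K ω (m:ℤ) := h ▸ ih.1
    rw [zero_mem_St_iff hω] at h0
    push_neg at h0
    exact hc (by omega)
  · omega

include hω hl hlK ha in
lemma wq_not_mem_TT (m : ℕ) : wq K l ω m ∉ TT K l ω m := by
  by_cases hc : ω (m:ℤ) = gg K l ω m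
  · rw [wq, if_pos hc]
    have he := nth_CC_mem hl hlK hω ha m (gg_inv hl hlK hω ha m).1
    rw [CC, Finset.mem_sdiff] at he
    exact he.2
  · rw [wq, if_neg hc]
    rw [TT, Finset.mem_insert]
    push_neg
    exact ⟨hc, omega_not_mem_St hω m⟩

include hω hl hlK ha in
lemma wq_mem_CC (m : ℕ) (hc : ω (m:ℤ) = gg K l ω m) : wq K l ω m ∈ CC K l ω m := by
  rw [wq, if_pos hc]
  exact nth_CC_mem hl hlK hω ha m (gg_inv hl hlK hω ha m).1

include hω hl hlK ha in
lemma wq_bounds (m : ℕ) : 0 ≤ wq K l ω m ∧ wq K l ω m ≤ K := by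
  by_cases hc : ω (m:ℤ) = gg K l ω m
  · have he := wq_mem_CC hl hlK hω ha m hc
    rw [CC, Finset.mem_sdiff, Finset.mem_Icc] at he
    omega
  · rw [wq, if_neg hc]
    have := hω.1 (m:ℤ); rw [Finset.mem_Icc] at this
    omega

include hω hl hlK ha in
lemma zero_mem_TTw (m : ℕ) : (0:ℤ) ∈ TT K l ω m ∨ wq K l ω m = 0 := by
  by_cases h0 : ω (m:ℤ) = 0
  · by_cases hc : ω (m:ℤ) = gg K l ω m
    · left; rw [TT, ← h0, hc]; exact Finset.mem_insert_self _ _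
    · right; rw [wq, if_neg hc]; exact h0
  · left
    rw [TT]
    exact Finset.mem_insert_of_mem ((zero_mem_St_iff hω _).2 h0)

include hω in
lemma mem_St_succ (m : ℤ) {v : ℤ} :
    v ∈ St K ω (m+1) ↔ (v + 1 ≠ 0 ∧ (v + 1 ∈ St K ω m ∨ v + 1 = ω m)) := by
  rw [St_step hω.1]
  simp only [Finset.mem_image, Finset.mem_erase, Finset.mem_union, Finset.mem_singleton]
  constructor
  · rintro ⟨u, ⟨hu0, hu⟩, rfl⟩
    constructor
    · omega
    · convert hu using 2 <;> omega
  · rintro ⟨h0, h⟩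
    exact ⟨v + 1, ⟨h0, h⟩, by ring⟩

include hω hl hlK ha in
lemma mem_TT_succ (m : ℕ) {v : ℤ} :
    v ∈ TT K l ω (m+1) ↔ (v + 1 ≠ 0 ∧ (v + 1 ∈ TT K l ω m ∨ v + 1 = wq K l ω m)) := by
  have hcast : ((m + 1 : ℕ) : ℤ) = (m : ℤ) + 1 := by push_cast; ring
  have hSt : ∀ u : ℤ, (u ∈ St K ω ((m+1:ℕ):ℤ) ↔ (u + 1 ≠ 0 ∧ (u + 1 ∈ St K ω (m:ℤ) ∨ u + 1 = ω (m:ℤ)))) := by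
    intro u; rw [hcast, mem_St_succ hω]
  rw [TT, TT, Finset.mem_insert, Finset.mem_insert, hSt v]
  by_cases hc : ω (m:ℤ) = gg K l ω m
  · have hgs : gg K l ω (m+1) = wq K l ω m - 1 := gg_succ_eq_wq m hc
    have he : wq K l ω m ∈ CC K l ω m := by
      rw [wq, if_pos hc]
      exact nth_CC_mem hl hlK hω ha m (gg_inv hl hlK hω ha m).1
    rw [CC, Finset.mem_sdiff, Finset.mem_Icc] at he
    constructor
    · rintro (h | ⟨h1, h2 | h2⟩)
      · exact ⟨by omega, Or.inr (by omega)⟩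
      · exact ⟨h1, Or.inl (Or.inr h2)⟩
      · exact ⟨h1, Or.inl (Or.inl (by omega))⟩
    · rintro ⟨h1, (h2 | h2) | h2⟩
      · exact Or.inr ⟨h1, Or.inr (by omega)⟩
      · exact Or.inr ⟨h1, Or.inl h2⟩
      · exact Or.inl (by omega)
  · have hgs : gg K l ω (m+1) = gg K l ω m - 1 := gg_succ_eq_slide m hc
    have hg1 : 1 ≤ gg K l ω m := slide_pos hl hlK hω ha m hc
    have hwq : wq K l ω m = ω (m:ℤ) := by rw [wq, if_neg hc]
    constructor
    · rintro (h | ⟨h1, h2 | h2⟩)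
      · exact ⟨by omega, Or.inl (Or.inl (by omega))⟩
      · exact ⟨h1, Or.inl (Or.inr h2)⟩
      · exact ⟨h1, Or.inr (by omega)⟩
    · rintro ⟨h1, (h2 | h2) | h2⟩
      · exact Or.inl (by omega)
      · exact Or.inr ⟨h1, Or.inl h2⟩
      · exact Or.inr ⟨h1, Or.inr (by omega)⟩

include hω hl hlK ha in
lemma TT_subset (m : ℕ) : TT K l ω m ⊆ Finset.Icc (0:ℤ) ((K:ℤ) - 1) := by
  rw [TT]
  intro x hx
  rcases Finset.mem_insert.1 hx with h | h
  · have := gg_inv hl hlK hω ha m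
    rw [h, Finset.mem_Icc]
    exact ⟨this.2.1, this.2.2⟩
  · exact St_subset hω.1 _ h

include hω hl hlK ha in
lemma gg0_le : gg K l ω 0 ≤ (K:ℤ) - l := by
  have hcard : 0 < ((Finset.Icc 0 ((K : ℤ) - l)) \ St K ω 0).card := by
    have h1 : (Finset.Icc (0:ℤ) ((K:ℤ) - l)).card = K - l + 1 := by
      rw [Int.card_Icc]; omega
    have h2 := Finset.le_card_sdiff (St K ω 0) (Finset.Icc (0:ℤ) ((K:ℤ) - l))
    have h3 : (St K ω 0).card = l - 1 := by
      have := card_St_zero hω; omega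
    omega
  have hmem := nth_mem hcard
  rw [Finset.mem_sdiff, Finset.mem_Icc] at hmem
  have : gg K l ω 0 = nth ((Finset.Icc 0 ((K : ℤ) - l)) \ St K ω 0) 0 := by simp [gg]
  rw [this]
  exact hmem.1.2

include hω hl hlK ha in
lemma hall_TT0 (i : ℕ) (hi : i < l) : nth (TT K l ω 0) i ≤ (K:ℤ) - l + i := by
  set t := nth (TT K l ω 0) i with ht
  have hcard : (TT K l ω 0).card = l := card_TT hl hω ha 0 (gg_inv hl hlK hω ha 0).1
  have hhn := hall_nth (A := TT K l ω 0) (i := i) (by omega)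
  rw [hcard, ← ht] at hhn
  by_cases hcase : t ≤ (K:ℤ) - l
  · omega
  · push_neg at hcase
    have hsub : (TT K l ω 0).filter (fun x => t ≤ x) ⊆ (St K ω 0).filter (fun x => t ≤ x) := by
      intro x hx
      rw [Finset.mem_filter] at hx ⊢
      refine ⟨?_, hx.2⟩
      rcases Finset.mem_insert.1 (by rw [TT] at hx; exact hx.1) with h | h
      · exfalso
        have := gg0_le hl hlK hω ha
        have := hx.2
        omega
      · exact h
    have htK : t ≤ (K:ℤ) ∧ 0 ≤ t := by
      have := TT_subset hl hlK hω ha 0 (nth_mem (by omega : i < (TT K l ω 0).card))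
      rw [Finset.mem_Icc] at this
      constructor <;> omega
    have hst := hall_St_zero hω htK.2 htK.1
    have hc2 : ((TT K l ω 0).filter (fun x => t ≤ x)).card
        ≤ ((St K ω 0).filter (fun x => t ≤ x)).card := Finset.card_le_card hsub
    omega

end Ghost

/-- the new configuration -/
noncomputable def om2 (K l : ℕ) (ω : ℤ → ℤ) : ℤ → ℤ := fun n =>
  if 0 ≤ n then wq K l ω n.toNat
  else if -(l:ℤ) ≤ n then nth (TT K l ω 0) ((l:ℤ) + n).toNat - n
  else l

section Ghost2

variable {K l : ℕ} {ω : ℤ → ℤ}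

lemma pp_om2_nonneg (m : ℕ) : pp (om2 K l ω) (m : ℤ) = (m : ℤ) + wq K l ω m := by
  simp [pp, om2, Int.toNat_natCast]

lemma pp_om2_neg_near {n : ℤ} (h1 : -(l:ℤ) ≤ n) (h2 : n < 0) :
    pp (om2 K l ω) n = nth (TT K l ω 0) ((l:ℤ) + n).toNat := by
  simp only [pp, om2, if_neg (by omega : ¬ (0:ℤ) ≤ n), if_pos h1]
  ring

lemma pp_om2_neg_far {n : ℤ} (h : n < -(l:ℤ)) : pp (om2 K l ω) n = n + l := by
  simp only [pp, om2, if_neg (by omega : ¬ (0:ℤ) ≤ n), if_neg (by omega : ¬ -(l:ℤ) ≤ n)]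

variable (hK : 2 ≤ K) (hl : 1 ≤ l) (hlK : 2 * l ≤ K)
  (hω : ω ∈ OmegaK K) (ha : aOm K ω = l - 1)

include hω hl hlK ha in
lemma card_TT0 : (TT K l ω 0).card = l := card_TT hl hω ha 0 (gg_inv hl hlK hω ha 0).1

include hω hl hlK ha in
lemma main_inv : ∀ m : ℕ,
    (∀ a b : ℤ, a < m → b < m → pp (om2 K l ω) a = pp (om2 K l ω) b → a = b) ∧
    (∀ v : ℤ, v < m → ∃ n : ℤ, n < m ∧ pp (om2 K l ω) n = v) ∧
    (∀ v : ℤ, 0 ≤ v → (v ∈ TT K l ω m ↔ ∃ n : ℤ, n < m ∧ pp (om2 K l ω) n = m + v)) := by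
  have hc0 : (TT K l ω 0).card = l := card_TT0 hl hlK hω ha
  have hTsub := TT_subset hl hlK hω ha
  intro m
  induction m with
  | zero =>
    refine ⟨?_, ?_, ?_⟩
    · -- injectivity on negatives
      intro a b ha0 hb0 hab
      simp only [Nat.cast_zero] at ha0 hb0
      rcases le_or_gt (-(l:ℤ)) a with haL | haL <;> rcases le_or_gt (-(l:ℤ)) b with hbL | hbL
      · rw [pp_om2_neg_near haL ha0, pp_om2_neg_near hbL hb0] at hab
        have hia : ((l:ℤ) + a).toNat < (TT K l ω 0).card := by rw [hc0]; omega
        have hib : ((l:ℤ) + b).toNat < (TT K l ω 0).card := by rw [hc0]; omega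
        have := nth_inj hia hib hab
        omega
      · exfalso
        rw [pp_om2_neg_near haL ha0, pp_om2_neg_far hbL] at hab
        have := hTsub 0 (nth_mem (show ((l:ℤ) + a).toNat < (TT K l ω 0).card by rw [hc0]; omega))
        rw [Finset.mem_Icc] at this
        omega
      · exfalso
        rw [pp_om2_neg_far haL, pp_om2_neg_near hbL hb0] at hab
        have := hTsub 0 (nth_mem (show ((l:ℤ) + b).toNat < (TT K l ω 0).card by rw [hc0]; omega))
        rw [Finset.mem_Icc] at this
        omega
      · rw [pp_om2_neg_far haL, pp_om2_neg_far hbL] at hab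
        omega
    · -- cover negatives
      intro v hv
      simp only [Nat.cast_zero] at hv
      refine ⟨v - l, by omega, ?_⟩
      rw [pp_om2_neg_far (by omega)]
      ring
    · -- state at 0
      intro v hv0
      simp only [Nat.cast_zero, zero_add]
      constructor
      · intro hvT
        have hidx : idx (TT K l ω 0) v < l := by
          have := idx_lt hvT; omega
        refine ⟨(idx (TT K l ω 0) v : ℤ) - l, by omega, ?_⟩
        rw [pp_om2_neg_near (by omega) (by omega)]
        rw [show (l:ℤ) + ((idx (TT K l ω 0) v : ℤ) - l) = (idx (TT K l ω 0) v : ℤ) by ring,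
          Int.toNat_natCast]
        exact nth_idx hvT
      · rintro ⟨n, hn, he⟩
        rcases le_or_gt (-(l:ℤ)) n with hL | hL
        · rw [pp_om2_neg_near hL hn] at he
          rw [← he]
          exact nth_mem (by rw [hc0]; omega)
        · exfalso
          rw [pp_om2_neg_far hL] at he
          omega
  | succ m ih =>
    obtain ⟨ihinj, ihcov, ihst⟩ := ih
    have hcast : ((m + 1 : ℕ) : ℤ) = (m : ℤ) + 1 := by push_cast; ring
    have hwb := wq_bounds hl hlK hω ha m
    have hwnm := wq_not_mem_TT hl hlK hω ha m
    have hppm := pp_om2_nonneg (K := K) (l := l) (ω := ω) m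
    refine ⟨?_, ?_, ?_⟩
    · intro a b ha1 hb1 hab
      rw [hcast] at ha1 hb1
      by_cases hea : a = (m:ℤ) <;> by_cases heb : b = (m:ℤ)
      · rw [hea, heb]
      · exfalso
        subst hea
        have hbm : b < (m:ℤ) := by omega
        rw [hppm] at hab
        have : wq K l ω m ∈ TT K l ω m :=
          (ihst (wq K l ω m) hwb.1).2 ⟨b, hbm, by omega⟩
        exact hwnm this
      · exfalso
        subst heb
        have ham : a < (m:ℤ) := by omega
        rw [hppm] at hab
        have : wq K l ω m ∈ TT K l ω m :=
          (ihst (wq K l ω m) hwb.1).2 ⟨a, ham, by omega⟩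
        exact hwnm this
      · exact ihinj a b (by omega) (by omega) hab
    · intro v hv
      rw [hcast] at hv
      rcases lt_or_ge v (m:ℤ) with h | h
      · obtain ⟨n, hn, he⟩ := ihcov v h
        exact ⟨n, by omega, he⟩
      · have hvm : v = (m:ℤ) := by omega
        subst hvm
        rcases zero_mem_TTw hl hlK hω ha m with h0 | h0
        · obtain ⟨n, hn, he⟩ := (ihst 0 le_rfl).1 h0
          exact ⟨n, by omega, by omega⟩
        · exact ⟨(m:ℤ), by omega, by omega⟩
    · intro v hv0
      rw [mem_TT_succ hl hlK hω ha m, hcast]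
      constructor
      · rintro ⟨h1, h2 | h2⟩
        · obtain ⟨n, hn, he⟩ := (ihst (v+1) (by omega)).1 h2
          exact ⟨n, by omega, by omega⟩
        · exact ⟨(m:ℤ), by omega, by omega⟩
      · rintro ⟨n, hn, he⟩
        by_cases hnm : n = (m:ℤ)
        · subst hnm
          rw [hppm] at he
          exact ⟨by omega, Or.inr (by omega)⟩
        · have h2 : v + 1 ∈ TT K l ω m :=
            (ihst (v+1) (by omega)).2 ⟨n, by omega, by omega⟩
          exact ⟨by omega, Or.inl h2⟩


include hK hl hlK hω ha in
lemma om2_bounds : ∀ n, om2 K l ω n ∈ Finset.Icc (0:ℤ) (K:ℤ) := by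
  intro n
  rw [Finset.mem_Icc]
  rcases le_or_gt 0 n with h0 | h0
  · have := wq_bounds hl hlK hω ha n.toNat
    simp only [om2, if_pos h0]
    omega
  · rcases le_or_gt (-(l:ℤ)) n with hL | hL
    · have heq : om2 K l ω n = nth (TT K l ω 0) ((l:ℤ) + n).toNat - n := by
        simp only [om2, if_neg (by omega : ¬ (0:ℤ) ≤ n), if_pos hL]
      have hidx : ((l:ℤ) + n).toNat < l := by omega
      have hmem := TT_subset hl hlK hω ha 0
        (nth_mem (show ((l:ℤ) + n).toNat < (TT K l ω 0).card by
          rw [card_TT0 hl hlK hω ha]; omega))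
      rw [Finset.mem_Icc] at hmem
      have hhall := hall_TT0 hl hlK hω ha _ hidx
      have : ((((l:ℤ) + n).toNat : ℤ)) = (l:ℤ) + n := by omega
      rw [this] at hhall
      rw [heq]
      constructor <;> omega
    · simp only [om2, if_neg (by omega : ¬ (0:ℤ) ≤ n), if_neg (by omega : ¬ -(l:ℤ) ≤ n)]
      omega

include hK hl hlK hω ha in
lemma om2_bijective : Function.Bijective (pp (om2 K l ω)) := by
  obtain hinv := main_inv hl hlK hω ha
  constructor
  · intro a b hab
    set m : ℕ := (max a b + 1).toNat with hm
    have hma : a < (m:ℤ) := by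
      have := Int.self_le_toNat (max a b + 1)
      have h1 : a ≤ max a b := le_max_left _ _
      omega
    have hmb : b < (m:ℤ) := by
      have := Int.self_le_toNat (max a b + 1)
      have h1 : b ≤ max a b := le_max_right _ _
      omega
    exact (hinv m).1 a b hma hmb hab
  · intro v
    set m : ℕ := (v + 1).toNat with hm
    have hmv : v < (m:ℤ) := by
      have := Int.self_le_toNat (v + 1)
      omega
    obtain ⟨n, -, he⟩ := (hinv m).2.1 v hmv
    exact ⟨n, he⟩

include hK hl hlK hω ha in
lemma om2_mem_OmegaK : om2 K l ω ∈ OmegaK K :=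
  ⟨om2_bounds hK hl hlK hω ha, om2_bijective hK hl hlK hω ha⟩

include hK hl hlK hω ha in
lemma TT_eq_St_om2 (m : ℕ) : TT K l ω m = St K (om2 K l ω) (m:ℤ) := by
  have hinv := main_inv hl hlK hω ha m
  ext v
  rw [mem_St (om2_bounds hK hl hlK hω ha)]
  constructor
  · intro hv
    have hv0 : 0 ≤ v := by
      have := TT_subset hl hlK hω ha m hv
      rw [Finset.mem_Icc] at this
      exact this.1
    obtain ⟨n, hn, he⟩ := (hinv.2.2 v hv0).1 hv
    exact ⟨hv0, n, hn, he⟩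
  · rintro ⟨hv0, n, hn, he⟩
    exact (hinv.2.2 v hv0).2 ⟨n, hn, he⟩

include hK hl hlK hω ha in
lemma om2_mem_OmegaKl : om2 K l ω ∈ OmegaKl K l := by
  refine ⟨om2_mem_OmegaK hK hl hlK hω ha, ?_⟩
  have h1 : St K (om2 K l ω) 0 = TT K l ω 0 := by
    have := TT_eq_St_om2 hK hl hlK hω ha 0
    simpa using this.symm
  have := card_St_zero (om2_mem_OmegaK hK hl hlK hω ha)
  rw [h1, card_TT0 hl hlK hω ha] at this
  exact this.symm

lemma om2_agree (i : ℕ) : om2 K l ω (i:ℤ) = wq K l ω i := by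
  simp [om2, Int.toNat_natCast]

end Ghost2

section Recovery

variable {K l : ℕ} {ω₁ ω₂ : ℤ → ℤ}
  (hK : 2 ≤ K) (hl : 1 ≤ l) (hlK : 2 * l ≤ K)
  (hω₁ : ω₁ ∈ OmegaK K) (ha₁ : aOm K ω₁ = l - 1)
  (hω₂ : ω₂ ∈ OmegaK K) (ha₂ : aOm K ω₂ = l - 1)

include hl hlK hω₁ ha₁ hω₂ ha₂ in
lemma recovery (m : ℕ)
    (hT : TT K l ω₁ m = TT K l ω₂ m)
    (hw : wq K l ω₁ m = wq K l ω₂ m)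
    (hg : gg K l ω₁ (m+1) = gg K l ω₂ (m+1)) :
    gg K l ω₁ m = gg K l ω₂ m ∧ ω₁ (m:ℤ) = ω₂ (m:ℤ) := by
  have hCC : CC K l ω₁ m = CC K l ω₂ m := by rw [CC, CC, hT]
  by_cases hc1 : ω₁ (m:ℤ) = gg K l ω₁ m <;> by_cases hc2 : ω₂ (m:ℤ) = gg K l ω₂ m
  · -- both conflict
    have key : ∀ (ω : ℤ → ℤ), ω ∈ OmegaK K → aOm K ω = l - 1 →
        ∀ hc : ω (m:ℤ) = gg K l ω m,
        gg K l ω m = nth (TT K l ω m) (idx (CC K l ω m) (wq K l ω m)) := by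
      intro ω hω ha hc
      have h1 : wq K l ω m = nth (CC K l ω m) (idx (TT K l ω m) (gg K l ω m)) := by
        rw [wq, if_pos hc]
      have hgmem : gg K l ω m ∈ TT K l ω m := by rw [TT]; exact Finset.mem_insert_self _ _
      have hidxlt : idx (TT K l ω m) (gg K l ω m) < (CC K l ω m).card := by
        have h2 := idx_lt hgmem
        have h3 := card_TT hl hω ha m (gg_inv hl hlK hω ha m).1
        have h4 := card_CC hl hlK hω ha m (gg_inv hl hlK hω ha m).1
        omega
      rw [h1, idx_nth hidxlt, nth_idx hgmem]
    have e1 := key ω₁ hω₁ ha₁ hc1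
    have e2 := key ω₂ hω₂ ha₂ hc2
    have hgeq : gg K l ω₁ m = gg K l ω₂ m := by rw [e1, e2, hT, hCC, hw]
    exact ⟨hgeq, by rw [hc1, hc2, hgeq]⟩
  · -- ω₁ conflict, ω₂ slide : impossible
    exfalso
    have h1 : gg K l ω₁ (m+1) = wq K l ω₁ m - 1 := gg_succ_eq_wq m hc1
    have h2 : gg K l ω₂ (m+1) = gg K l ω₂ m - 1 := gg_succ_eq_slide m hc2
    have h3 : wq K l ω₁ m ∉ TT K l ω₁ m := wq_not_mem_TT hl hlK hω₁ ha₁ m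
    have h4 : gg K l ω₂ m ∈ TT K l ω₂ m := by rw [TT]; exact Finset.mem_insert_self _ _
    rw [← hT] at h4
    have : wq K l ω₁ m = gg K l ω₂ m := by omega
    rw [this] at h3
    exact h3 h4
  · exfalso
    have h1 : gg K l ω₂ (m+1) = wq K l ω₂ m - 1 := gg_succ_eq_wq m hc2
    have h2 : gg K l ω₁ (m+1) = gg K l ω₁ m - 1 := gg_succ_eq_slide m hc1
    have h3 : wq K l ω₂ m ∉ TT K l ω₂ m := wq_not_mem_TT hl hlK hω₂ ha₂ m
    have h4 : gg K l ω₁ m ∈ TT K l ω₁ m := by rw [TT]; exact Finset.mem_insert_self _ _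
    rw [hT] at h4
    have : wq K l ω₂ m = gg K l ω₁ m := by omega
    rw [this] at h3
    exact h3 h4
  · -- both slide
    have h1 : gg K l ω₁ (m+1) = gg K l ω₁ m - 1 := gg_succ_eq_slide m hc1
    have h2 : gg K l ω₂ (m+1) = gg K l ω₂ m - 1 := gg_succ_eq_slide m hc2
    have hw1 : wq K l ω₁ m = ω₁ (m:ℤ) := by rw [wq, if_neg hc1]
    have hw2 : wq K l ω₂ m = ω₂ (m:ℤ) := by rw [wq, if_neg hc2]
    exact ⟨by omega, by rw [← hw1, ← hw2, hw]⟩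


include hK hl hlK hω₁ ha₁ hω₂ ha₂ in
lemma inj_recovery (N : ℕ)
    (hww : ∀ i : ℕ, i < N → wq K l ω₁ i = wq K l ω₂ i)
    (hgN : gg K l ω₁ N = gg K l ω₂ N)
    (hlow : ∀ i : ℕ, i < K → i < N → ω₁ (i:ℤ) = ω₂ (i:ℤ)) :
    ∀ i : ℕ, i < N → ω₁ (i:ℤ) = ω₂ (i:ℤ) := by
  have hTeq : ∀ m : ℕ, K ≤ m → m < N → TT K l ω₁ m = TT K l ω₂ m := by
    intro m hKm hmN
    rw [TT_eq_St_om2 hK hl hlK hω₁ ha₁ m, TT_eq_St_om2 hK hl hlK hω₂ ha₂ m]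
    apply St_congr
    intro n h1 h2
    have hn0 : 0 ≤ n := by omega
    have h3 : om2 K l ω₁ n = wq K l ω₁ n.toNat := by
      simp only [om2, if_pos hn0]
    have h4 : om2 K l ω₂ n = wq K l ω₂ n.toNat := by
      simp only [om2, if_pos hn0]
    rw [h3, h4]
    apply hww
    omega
  have main : ∀ d : ℕ, ∀ m : ℕ, m + d = N → K ≤ m →
      gg K l ω₁ m = gg K l ω₂ m ∧ ∀ i : ℕ, m ≤ i → i < N → ω₁ (i:ℤ) = ω₂ (i:ℤ) := by
    intro d
    induction d with
    | zero =>
      intro m hm _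
      rw [show m = N by omega]
      exact ⟨hgN, fun i h1 h2 => by omega⟩
    | succ d ihd =>
      intro m hm hKm
      obtain ⟨hg', htail⟩ := ihd (m+1) (by omega) (by omega)
      obtain ⟨hgm, hωm⟩ := recovery hl hlK hω₁ ha₁ hω₂ ha₂ m
        (hTeq m hKm (by omega)) (hww m (by omega)) hg'
      refine ⟨hgm, ?_⟩
      intro i h1 h2
      rcases eq_or_lt_of_le h1 with h | h
      · rw [← h]; exact hωm
      · exact htail i (by omega) h2
  intro i hiN
  rcases lt_or_ge i K with h | h
  · exact hlow i h hiN
  · rcases le_or_gt K N with hKN | hKN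
    · exact (main (N - K) K (by omega) le_rfl).2 i h hiN
    · omega

end Recovery


/-! ### Word sets -/

/-- the word set of `Ω_{K,lam}` -/
abbrev WT (K lam N : ℕ) : Type :=
  {w : Fin N → ℤ // ∃ ω ∈ OmegaKl K lam, ∀ i : Fin N, w i = ω ((i : ℕ) : ℤ)}

lemma WT_inj_fun (K lam N : ℕ) :
    ∃ f : WT K lam N → (Fin N → (Finset.Icc (0:ℤ) (K:ℤ))), Function.Injective f := by
  refine ⟨fun w i => ⟨w.1 i, ?_⟩, ?_⟩
  · obtain ⟨ω, hω, hw⟩ := w.2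
    rw [hw i]
    exact hω.1.1 _
  · intro w₁ w₂ h
    apply Subtype.ext
    funext i
    have := congr_fun h i
    exact congrArg Subtype.val this

instance WT_finite (K lam N : ℕ) : Finite (WT K lam N) := by
  obtain ⟨f, hf⟩ := WT_inj_fun K lam N
  exact Finite.of_injective f hf

lemma card_Icc_coe (K : ℕ) : Nat.card (Finset.Icc (0:ℤ) (K:ℤ)) = K + 1 := by
  rw [Nat.card_eq_finsetCard, Int.card_Icc]
  omega

lemma WT_card_le (K lam N : ℕ) : Nat.card (WT K lam N) ≤ (K + 1) ^ N := by
  obtain ⟨f, hf⟩ := WT_inj_fun K lam N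
  calc Nat.card (WT K lam N) ≤ Nat.card (Fin N → (Finset.Icc (0:ℤ) (K:ℤ))) :=
        Nat.card_le_card_of_injective f hf
    _ = (K + 1) ^ N := by
        rw [Nat.card_pi, card_Icc_coe]
        simp [Finset.prod_const]

lemma const_mem_OmegaKl {K lam : ℕ} (h : lam ≤ K) : (fun _ => (lam:ℤ)) ∈ OmegaKl K lam := by
  refine ⟨⟨fun n => by
    rw [Finset.mem_Icc]
    refine ⟨?_, ?_⟩ <;> dsimp only <;> [positivity; exact_mod_cast h], ?_⟩, ?_⟩
  · constructor
    · intro a b hab; simpa using hab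
    · intro v; exact ⟨v - lam, by ring⟩
  · rw [aOm]
    have : (Finset.Icc (1:ℤ) (K:ℤ)).filter (fun k => k ≤ (lam:ℤ)) = Finset.Icc (1:ℤ) (lam:ℤ) := by
      ext k
      simp only [Finset.mem_filter, Finset.mem_Icc]
      constructor
      · rintro ⟨⟨h1, h2⟩, h3⟩; exact ⟨h1, h3⟩
      · rintro ⟨h1, h2⟩; exact ⟨⟨h1, by exact_mod_cast h2.trans (by exact_mod_cast h)⟩, h2⟩
    rw [this, Int.card_Icc]
    omega

lemma WT_nonempty {K lam : ℕ} (h : lam ≤ K) (N : ℕ) : Nonempty (WT K lam N) :=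
  ⟨⟨fun _ => (lam:ℤ), ⟨fun _ => (lam:ℤ), const_mem_OmegaKl h, fun _ => rfl⟩⟩⟩

lemma WT_card_pos {K lam : ℕ} (h : lam ≤ K) (N : ℕ) : 1 ≤ Nat.card (WT K lam N) :=
  Nat.one_le_iff_ne_zero.2 (Nat.card_ne_zero.2 ⟨WT_nonempty h N, WT_finite K lam N⟩)

/-- The key counting estimate. -/
lemma key_count {K l : ℕ} (hK : 2 ≤ K) (hl : 1 ≤ l) (hlK : 2 * l ≤ K) (N : ℕ) :
    Nat.card (WT K (l-1) N) ≤
      Nat.card (WT K l N) *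
        Nat.card ((Fin K → (Finset.Icc (0:ℤ) (K:ℤ))) × (Finset.Icc (0:ℤ) ((K:ℤ)-1))) := by
  classical
  rw [← Nat.card_prod]
  apply Nat.card_le_card_of_injective
    (f := fun w =>
      let ω := (w.2).choose
      ((⟨fun i => wq K l ω i,
          om2 K l ω, om2_mem_OmegaKl hK hl hlK (w.2).choose_spec.1.1 (w.2).choose_spec.1.2,
          fun i => (om2_agree (K := K) (l := l) (ω := ω) i).symm⟩ : WT K l N),
        (fun j => ⟨if h : (j:ℕ) < N then w.1 ⟨(j:ℕ), h⟩ else 0, by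
          split
          · next h =>
            rw [(w.2).choose_spec.2 ⟨(j:ℕ), h⟩]
            exact (w.2).choose_spec.1.1.1 _
          · simp⟩ : Fin K → (Finset.Icc (0:ℤ) (K:ℤ))),
        ⟨gg K l ω N, by
          have := gg_inv hl hlK (w.2).choose_spec.1.1 (w.2).choose_spec.1.2 N
          rw [Finset.mem_Icc]
          exact ⟨this.2.1, this.2.2⟩⟩))
  intro w₁ w₂ heq
  simp only [Prod.mk.injEq, Subtype.mk.injEq] at heq
  obtain ⟨h1, h2, h3⟩ := heq
  set ω₁ := (w₁.2).choose with hw1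
  set ω₂ := (w₂.2).choose with hw2
  have hs₁ := (w₁.2).choose_spec
  have hs₂ := (w₂.2).choose_spec
  have heqω : ∀ i : ℕ, i < N → ω₁ (i:ℤ) = ω₂ (i:ℤ) := by
    apply inj_recovery hK hl hlK hs₁.1.1 hs₁.1.2 hs₂.1.1 hs₂.1.2
    · intro i hi
      exact congr_fun h1 ⟨i, hi⟩
    · exact h3
    · intro i hiK hiN
      have hcc := congrArg Subtype.val (congr_fun h2 ⟨i, hiK⟩)
      have hval : ((⟨i, hiK⟩ : Fin K) : ℕ) = i := rfl
      simp only [hval] at hcc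
      rw [dif_pos hiN, dif_pos hiN] at hcc
      calc ω₁ (i:ℤ) = w₁.1 ⟨i, hiN⟩ := (hs₁.2 ⟨i, hiN⟩).symm
        _ = w₂.1 ⟨i, hiN⟩ := hcc
        _ = ω₂ (i:ℤ) := hs₂.2 ⟨i, hiN⟩
  apply Subtype.ext
  funext i
  rw [hs₁.2 i, hs₂.2 i]
  exact heqω i i.2

end EntM

/-- For `K ≥ 2` and `1 ≤ l ≤ K/2`, `h(Ω_{K,l-1}) ≤ h(Ω_{K,l})`. -/
theorem entropy_monotone (K l : ℕ) (hK : 2 ≤ K) (hl : 1 ≤ l) (hlK : 2 * l ≤ K) :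
    ent1 (OmegaKl K (l - 1)) ≤ ent1 (OmegaKl K l) := by
  classical
  have hlK' : l ≤ K := by omega
  have hl1K : l - 1 ≤ K := by omega
  set E := ((Fin K → (Finset.Icc (0:ℤ) (K:ℤ))) × (Finset.Icc (0:ℤ) ((K:ℤ)-1))) with hE
  set C : ℕ := Nat.card E with hC
  have hCpos : 1 ≤ C := by
    rw [hC]
    refine Nat.one_le_iff_ne_zero.2 (Nat.card_ne_zero.2 ⟨⟨⟨fun _ => ⟨0, ?_⟩, ⟨0, ?_⟩⟩⟩, ?_⟩)
    · rw [Finset.mem_Icc]; constructor <;> [rfl; positivity]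
    · rw [Finset.mem_Icc]
      constructor
      · rfl
      · have : (2:ℤ) ≤ K := by exact_mod_cast hK
        omega
    · infer_instance
  set u : ℕ → ℝ := fun N => Real.log (Nat.card (EntM.WT K (l-1) N)) / N with hu
  set v : ℕ → ℝ := fun N => Real.log (Nat.card (EntM.WT K l N)) / N with hv
  have hgoal : ent1 (OmegaKl K (l - 1)) = Filter.limsup u Filter.atTop := rfl
  have hgoal2 : ent1 (OmegaKl K l) = Filter.limsup v Filter.atTop := rfl
  rw [hgoal, hgoal2]
  have hu0 : ∀ N, 0 ≤ u N := by
    intro N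
    apply div_nonneg _ (by positivity)
    apply Real.log_nonneg
    exact_mod_cast EntM.WT_card_pos hl1K N
  have hv0 : ∀ N, 0 ≤ v N := by
    intro N
    apply div_nonneg _ (by positivity)
    apply Real.log_nonneg
    exact_mod_cast EntM.WT_card_pos hlK' N
  have hv_bdd : ∀ N, v N ≤ Real.log (K+1) := by
    intro N
    rcases Nat.eq_zero_or_pos N with rfl | hN
    · simpa [hv] using Real.log_nonneg (by exact_mod_cast Nat.le_add_left 1 K)
    · rw [hv]
      rw [div_le_iff₀ (by positivity)]
      calc Real.log (Nat.card (EntM.WT K l N)) ≤ Real.log ((K+1)^N) := by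
            apply Real.log_le_log
            · exact_mod_cast EntM.WT_card_pos hlK' N
            · exact_mod_cast EntM.WT_card_le K l N
        _ = N * Real.log (K+1) := by
            rw [show ((K:ℝ)+1)^N = ((K+1:ℕ):ℝ)^N by push_cast; ring]
            rw [Real.log_pow]
            push_cast; ring
        _ = Real.log (K+1) * N := by ring
  have hkey : ∀ N : ℕ, 1 ≤ N → u N ≤ v N + Real.log C / N := by
    intro N hN
    have hNpos : (0:ℝ) < N := by exact_mod_cast hN
    have ha1 : (1:ℝ) ≤ (Nat.card (EntM.WT K (l-1) N) : ℝ) := by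
      exact_mod_cast EntM.WT_card_pos hl1K N
    have hb1 : (1:ℝ) ≤ (Nat.card (EntM.WT K l N) : ℝ) := by
      exact_mod_cast EntM.WT_card_pos hlK' N
    have hC1 : (1:ℝ) ≤ (C:ℝ) := by exact_mod_cast hCpos
    have hcount : (Nat.card (EntM.WT K (l-1) N) : ℝ)
        ≤ (Nat.card (EntM.WT K l N) : ℝ) * (C:ℝ) := by
      have := EntM.key_count hK hl hlK N
      rw [hC, hE]
      exact_mod_cast this
    have hlog : Real.log (Nat.card (EntM.WT K (l-1) N))
        ≤ Real.log (Nat.card (EntM.WT K l N)) + Real.log C := by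
      calc Real.log (Nat.card (EntM.WT K (l-1) N))
          ≤ Real.log ((Nat.card (EntM.WT K l N) : ℝ) * (C:ℝ)) :=
            Real.log_le_log (by linarith) hcount
        _ = _ := Real.log_mul (by linarith) (by linarith)
    rw [hu, hv]
    calc Real.log (Nat.card (EntM.WT K (l-1) N)) / N
        ≤ (Real.log (Nat.card (EntM.WT K l N)) + Real.log C) / N := by gcongr
      _ = _ := add_div _ _ _
  -- limsup comparison
  rw [Filter.limsup_eq, Filter.limsup_eq]
  have hSu_bdd : BddBelow {a | ∀ᶠ N in Filter.atTop, u N ≤ a} := by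
    refine ⟨0, fun x hx => ?_⟩
    obtain ⟨N, hN⟩ := (hx.and (Filter.Eventually.of_forall hu0)).exists
    linarith [hN.1, hN.2]
  refine le_csInf ⟨Real.log (K+1), Filter.Eventually.of_forall hv_bdd⟩ ?_
  intro b hb
  have hball : ∀ ε : ℝ, 0 < ε → sInf {a | ∀ᶠ N in Filter.atTop, u N ≤ a} ≤ b + ε := by
    intro ε hε
    apply csInf_le hSu_bdd
    obtain ⟨N₀, hN₀⟩ := exists_nat_ge (Real.log C / ε)
    filter_upwards [hb, Filter.eventually_ge_atTop 1, Filter.eventually_ge_atTop N₀]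
      with N h1 h2 h3
    have hNpos : (0:ℝ) < N := by exact_mod_cast h2
    have hC0 : 0 ≤ Real.log C := Real.log_nonneg (by exact_mod_cast hCpos)
    have hstep : Real.log C / N ≤ ε := by
      rw [div_le_iff₀ hNpos]
      have hN0N : (N₀:ℝ) ≤ N := by exact_mod_cast h3
      have := (div_le_iff₀ hε).1 (hN₀.trans hN0N)
      calc Real.log C ≤ N * ε := this
        _ = ε * N := by ring
    calc u N ≤ v N + Real.log C / N := hkey N h2
      _ ≤ b + ε := by linarith
  -- conclude
  by_contra hcon
  push_neg at hcon
  have := hball ((sInf {a | ∀ᶠ N in Filter.atTop, u N ≤ a} - b)/2) (by linarith)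
  linarith
end
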